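/- arXiv:1407.4562 — 9 statements merged into one kernel-verified Lean document; each statement's English description precedes it below -/
import Mathlib

section
/- Define G_i^{(k)}(x) = (F_{i+1}^{(k)}(x) - (k-1)·F_i^{(k)}(x))/(x-k) for i≥1 and G_0^{(k)}(x)=1. Then G_i^{(k)}(x) = Σ_{j=0}^{i} F_j^{(k)}(x) for all i≥0. -/
open Polynomial

noncomputable def treeF (k : ℝ) : ℕ → Polynomial ℝ
  | 0 => 1
  | 1 => X
  | 2 => X ^ 2 - C k
  | (n + 3) => X * treeF k (n + 2) - C (k - 1) * treeF k (n + 1)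

theorem treeG_eq_sum (k : ℕ) (hk : 2 ≤ k) (i : ℕ) (hi : 1 ≤ i) :
    (X - C (k : ℝ)) * ∑ j ∈ Finset.range (i + 1), treeF (k : ℝ) j =
      treeF (k : ℝ) (i + 1) - C ((k : ℝ) - 1) * treeF (k : ℝ) i := by
  induction i, hi using Nat.le_induction with
  | base =>
    simp [treeF, Finset.sum_range_succ]
    ring
  | succ n hn ih =>
    obtain ⟨m, rfl⟩ := Nat.exists_eq_add_of_le hn
    rw [Finset.sum_range_succ, mul_add, ih]
    have h3 : treeF (k : ℝ) (1 + m + 1 + 1) = X * treeF (k : ℝ) (m + 2) - C ((k : ℝ) - 1) * treeF (k : ℝ) (m + 1) := by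
      rw [show 1 + m + 1 + 1 = m + 3 by ring]; rfl
    rw [h3, show 1 + m + 1 = m + 2 by ring, show 1 + m = m + 1 by ring]
    simp only [map_sub, map_one]
    ring
end

section
/- The polynomials F_i^{(k)} are orthogonal with respect to the weight w(x)=√(4(k-1)-x²)/(k²-x²) on the interval [-2√(k-1), 2√(k-1)]: for i≠j, ∫_{-2√(k-1)}^{2√(k-1)} F_i^{(k)}(x)·F_j^{(k)}(x)·w(x) dx = 0. -/
set_option maxHeartbeats 1000000

open Polynomial Real Set MeasureTheory intervalIntegral

lemma treeF_eval_neg (k : ℝ) (n : ℕ) (x : ℝ) :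
    (treeF k n).eval (-x) = (-1) ^ n * (treeF k n).eval x := by
  induction n using Nat.strong_induction_on with
  | _ n ih =>
    match n with
    | 0 => simp [treeF]
    | 1 => simp [treeF]
    | 2 => simp [treeF]
    | (m + 3) =>
      have h1 := ih (m + 2) (by omega)
      have h2 := ih (m + 1) (by omega)
      simp only [treeF, eval_sub, eval_mul, eval_X, eval_C, h1, h2, pow_succ]
      ring

lemma treeF_eval_trig (q : ℝ) (m : ℕ) (θ : ℝ) :
    q ^ 2 * ((treeF (q ^ 2 + 1) (m + 1)).eval (2 * q * Real.cos θ) * Real.sin θ)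
      = q ^ (m + 3) * Real.sin (((m : ℝ) + 2) * θ) - q ^ (m + 1) * Real.sin ((m : ℝ) * θ) := by
  have key : ∀ a : ℝ, Real.sin ((a + 1) * θ) + Real.sin ((a - 1) * θ)
      = 2 * Real.cos θ * Real.sin (a * θ) := by
    intro a
    rw [show (a + 1) * θ = a * θ + θ by ring, show (a - 1) * θ = a * θ - θ by ring,
      Real.sin_add, Real.sin_sub]
    ring
  induction m using Nat.strong_induction_on with
  | _ m ih =>
    match m with
    | 0 =>
      simp only [treeF, eval_X]
      push_cast
      norm_num
      rw [Real.sin_two_mul]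
      ring
    | 1 =>
      simp only [treeF, eval_sub, eval_pow, eval_X, eval_C]
      have hs3 : Real.sin (3 * θ) = 3 * Real.sin θ - 4 * Real.sin θ ^ 3 := Real.sin_three_mul θ
      have hsc : Real.sin θ ^ 2 = 1 - Real.cos θ ^ 2 := by
        have := Real.sin_sq_add_cos_sq θ; linarith
      push_cast
      rw [show ((1 : ℝ) + 2) = 3 by norm_num, one_mul, hs3]
      linear_combination (4 * q ^ 4 * Real.sin θ) * hsc
    | (m + 2) =>
      have h1 := ih (m + 1) (by omega)
      have h2 := ih m (by omega)
      have e1 := key ((m : ℝ) + 3)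
      have e2 := key ((m : ℝ) + 1)
      simp only [treeF, eval_sub, eval_mul, eval_X, eval_C] at *
      push_cast at *
      ring_nf at h1 h2 e1 e2 ⊢
      linear_combination (norm := ring_nf) (2 * q * Real.cos θ) * h1 - q ^ 2 * h2 -
        q ^ (m + 5) * e1 + q ^ (m + 3) * e2

lemma cos_image (c : ℝ) (hc : 0 < c) :
    (fun θ : ℝ => c * Real.cos θ) '' Icc 0 π = Icc (-c) c := by
  ext x
  constructor
  · rintro ⟨θ, hθ, rfl⟩
    dsimp only
    constructor
    · nlinarith [Real.neg_one_le_cos θ]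
    · nlinarith [Real.cos_le_one θ]
  · rintro ⟨h1, h2⟩
    refine ⟨Real.arccos (x / c), ⟨Real.arccos_nonneg _, Real.arccos_le_pi _⟩, ?_⟩
    dsimp only
    rw [Real.cos_arccos (by rw [le_div_iff₀ hc]; linarith) (by rw [div_le_one hc]; linarith)]
    field_simp

lemma subst_lemma (c : ℝ) (hc : 0 < c) (g : ℝ → ℝ) :
    ∫ x in (-c)..c, g x = ∫ θ in Ioo 0 π, (c * Real.sin θ) * g (c * Real.cos θ) := by
  rw [intervalIntegral.integral_of_le (by linarith), ← integral_Icc_eq_integral_Ioc,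
    ← cos_image c hc,
    integral_image_eq_integral_abs_deriv_smul measurableSet_Icc
      (fun θ _ => ((Real.hasDerivAt_cos θ).const_mul c).hasDerivWithinAt)
      (fun a ha b hb hab => Real.injOn_cos ha hb (mul_left_cancel₀ hc.ne' hab)) g,
    integral_Icc_eq_integral_Ioc, integral_Ioc_eq_integral_Ioo]
  refine setIntegral_congr_fun measurableSet_Ioo (fun θ hθ => ?_)
  have hs : 0 ≤ Real.sin θ := Real.sin_nonneg_of_nonneg_of_le_pi hθ.1.le hθ.2.le
  rw [smul_eq_mul, abs_mul, abs_of_pos hc, abs_neg, abs_of_nonneg hs]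

variable {q : ℝ}

lemma hD_pos (hq : 1 < q) (θ : ℝ) : 0 < (q^2+1)^2 - 4*q^2*Real.cos θ^2 := by
  have h1 : Real.cos θ^2 ≤ 1 := by nlinarith [Real.neg_one_le_cos θ, Real.cos_le_one θ]
  have h2 : 4*q^2*Real.cos θ^2 ≤ 4*q^2 := by nlinarith [sq_nonneg q]
  have h4 : 1 < q^2 := by nlinarith
  have h3 : 0 < (q^2-1)^2 := by nlinarith
  nlinarith

lemma hD_cont : Continuous (fun θ : ℝ => (q^2+1)^2 - 4*q^2*Real.cos θ^2) := by fun_prop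

lemma Jrel (hq : 1 < q) :
    ∫ θ in (0:ℝ)..π, (q^2 * Real.cos (2*θ) - 1) / ((q^2+1)^2 - 4*q^2*Real.cos θ^2) = 0 := by
  have hden : ∀ θ : ℝ, 0 < q^2 - Real.cos (2*θ) := fun θ => by
    nlinarith [Real.cos_le_one (2*θ)]
  have hH : ∀ θ : ℝ, HasDerivAt
      (fun θ => Real.arctan (Real.sin (2*θ) / (q^2 - Real.cos (2*θ))) / 2)
      ((q^2 * Real.cos (2*θ) - 1) / ((q^2+1)^2 - 4*q^2*Real.cos θ^2)) θ := by
    intro θ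
    have h2θ : HasDerivAt (fun θ : ℝ => 2*θ) 2 θ := by
      simpa using (hasDerivAt_id θ).const_mul 2
    have hsin : HasDerivAt (fun θ : ℝ => Real.sin (2*θ)) (Real.cos (2*θ) * 2) θ :=
      (Real.hasDerivAt_sin (2*θ)).comp θ h2θ
    have hcos : HasDerivAt (fun θ : ℝ => q^2 - Real.cos (2*θ)) (Real.sin (2*θ) * 2) θ := by
      have := ((Real.hasDerivAt_cos (2*θ)).comp θ h2θ).const_sub (q^2)
      simpa using this
    have hu := (hsin.div hcos (hden θ).ne').arctan.div_const 2
    have hs2 : Real.sin (2*θ)^2 = 1 - Real.cos (2*θ)^2 := by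
      nlinarith [Real.sin_sq_add_cos_sq (2*θ)]
    have hd := (hden θ).ne'
    have hpos : (0:ℝ) < (q^2 - Real.cos (2*θ))^2 + Real.sin (2*θ)^2 := by
      nlinarith [sq_nonneg (Real.sin (2*θ)), hden θ, sq_nonneg (q^2 - Real.cos (2*θ))]
    have hval : 1 / (1 + (Real.sin (2*θ) / (q^2 - Real.cos (2*θ))) ^ 2) *
          ((Real.cos (2*θ) * 2 * (q^2 - Real.cos (2*θ)) -
            Real.sin (2*θ) * (Real.sin (2*θ) * 2)) / (q^2 - Real.cos (2*θ)) ^ 2) / 2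
        = (Real.cos (2*θ) * (q^2 - Real.cos (2*θ)) - Real.sin (2*θ)^2)
            / ((q^2 - Real.cos (2*θ))^2 + Real.sin (2*θ)^2) := by
      rw [div_eq_div_iff (by positivity) hpos.ne']
      field_simp
    have hD : (q^2+1)^2 - 4*q^2*Real.cos θ^2
        = (q^2 - Real.cos (2*θ))^2 + Real.sin (2*θ)^2 := by
      rw [hs2, Real.cos_two_mul]; ring
    have hnum : q^2 * Real.cos (2*θ) - 1
        = Real.cos (2*θ) * (q^2 - Real.cos (2*θ)) - Real.sin (2*θ)^2 := by
      linear_combination hs2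
    refine HasDerivAt.congr_deriv hu ?_
    simp only [Pi.div_apply]
    rw [hval, hD, hnum]
  have hint : IntervalIntegrable
      (fun θ => (q^2 * Real.cos (2*θ) - 1) / ((q^2+1)^2 - 4*q^2*Real.cos θ^2)) volume 0 π := by
    apply Continuous.intervalIntegrable
    apply Continuous.div _ hD_cont (fun θ => (hD_pos hq θ).ne')
    fun_prop
  rw [intervalIntegral.integral_eq_sub_of_hasDerivAt (fun θ _ => hH θ) hint]
  norm_num [Real.sin_two_pi]

lemma int_cos_zero {c : ℝ} (hc : c ≠ 0) (hs : Real.sin (c * π) = 0) :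
    ∫ θ in (0:ℝ)..π, Real.cos (c * θ) = 0 := by
  have h := intervalIntegral.integral_comp_mul_left (fun x => Real.cos x) hc (a := 0) (b := π)
  simp only [mul_zero] at h
  rw [h, integral_cos, Real.sin_zero, hs]
  simp

lemma int_cos_nat (m : ℕ) (hm : m ≠ 0) :
    ∫ θ in (0:ℝ)..π, Real.cos (2 * (m:ℝ) * θ) = 0 := by
  have hc : (2 * (m:ℝ)) ≠ 0 := by
    simp [Nat.cast_ne_zero.mpr hm]
  apply int_cos_zero hc
  have : ((2 * m : ℤ) : ℝ) = 2 * (m:ℝ) := by push_cast; ring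
  rw [← this]
  exact Real.sin_int_mul_pi (2 * m)

lemma cosInt (hq : 1 < q) (c : ℝ) : IntervalIntegrable
    (fun θ => Real.cos (c*θ) / ((q^2+1)^2 - 4*q^2*Real.cos θ^2)) volume 0 π := by
  apply Continuous.intervalIntegrable
  apply Continuous.div _ hD_cont (fun θ => (hD_pos hq θ).ne')
  fun_prop

noncomputable def Jh (q : ℝ) (t : ℕ) : ℝ :=
  ∫ θ in (0:ℝ)..π, Real.cos (2*(t:ℝ)*θ) / ((q^2+1)^2 - 4*q^2*Real.cos θ^2)

lemma Jstep (hq : 1 < q) : ∀ t : ℕ, q^2 * Jh q (t+1) = Jh q t := by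
  have hq0 : q ≠ 0 := by nlinarith
  intro t
  induction t with
  | zero =>
    have e : q^2 * Jh q 1 - Jh q 0
        = ∫ θ in (0:ℝ)..π, (q^2 * Real.cos (2*θ) - 1) / ((q^2+1)^2 - 4*q^2*Real.cos θ^2) := by
      unfold Jh
      rw [← intervalIntegral.integral_const_mul,
        ← intervalIntegral.integral_sub ((cosInt hq _).const_mul _) (cosInt hq _)]
      apply intervalIntegral.integral_congr
      intro θ _
      have hD0 := (hD_pos hq θ).ne'
      norm_num
      field_simp
    have := Jrel hq
    rw [this] at e
    linarith [e]
  | succ t ih =>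
    have key : Jh q (t+1+1) + Jh q t = ((q^4+1)/q^2) * Jh q (t+1) := by
      unfold Jh
      rw [← intervalIntegral.integral_add (cosInt hq _) (cosInt hq _)]
      have hsplit : EqOn (fun θ => Real.cos (2*((t:ℝ)+1+1)*θ) / ((q^2+1)^2 - 4*q^2*Real.cos θ^2)
            + Real.cos (2*(t:ℝ)*θ) / ((q^2+1)^2 - 4*q^2*Real.cos θ^2))
          (fun θ => ((q^4+1)/q^2) * (Real.cos (2*((t:ℝ)+1)*θ) / ((q^2+1)^2 - 4*q^2*Real.cos θ^2))
            - (1/q^2) * Real.cos (2*((t:ℝ)+1)*θ)) (uIcc 0 π) := by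
        intro θ _
        have hC : Real.cos (2*((t:ℝ)+1+1)*θ) + Real.cos (2*(t:ℝ)*θ)
            = 2 * Real.cos (2*((t:ℝ)+1)*θ) * Real.cos (2*θ) := by
          rw [show 2*((t:ℝ)+1+1)*θ = 2*((t:ℝ)+1)*θ + 2*θ by ring,
            show 2*(t:ℝ)*θ = 2*((t:ℝ)+1)*θ - 2*θ by ring, Real.cos_add, Real.cos_sub]
          ring
        have hD0 := (hD_pos hq θ).ne'
        have hDd : Real.cos (2*θ)
            = ((q^4+1) - ((q^2+1)^2 - 4*q^2*Real.cos θ^2))/(2*q^2) := by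
          rw [Real.cos_two_mul]; field_simp; ring
        dsimp only
        rw [← add_div, hC, hDd]
        generalize (q^2+1)^2 - 4*q^2*Real.cos θ^2 = D at hD0 ⊢
        field_simp
      have cast1 : ((t+1+1 : ℕ) : ℝ) = (t:ℝ)+1+1 := by push_cast; ring
      have cast2 : ((t+1 : ℕ) : ℝ) = (t:ℝ)+1 := by push_cast; ring
      rw [cast1, cast2, intervalIntegral.integral_congr hsplit]
      have hi2 : IntervalIntegrable (fun θ => (1/q^2) * Real.cos (2*((t:ℝ)+1)*θ)) volume 0 π := by
        apply Continuous.intervalIntegrable; fun_prop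
      rw [intervalIntegral.integral_sub ((cosInt hq _).const_mul _) hi2,
        intervalIntegral.integral_const_mul, intervalIntegral.integral_const_mul]
      have hz : ∫ θ in (0:ℝ)..π, Real.cos (2*((t:ℝ)+1)*θ) = 0 := by
        have := int_cos_nat (t+1) (Nat.succ_ne_zero t)
        rwa [cast2] at this
      simp [hz]
    have key' : q^2 * (Jh q (t+1+1) + Jh q t) = (q^4+1) * Jh q (t+1) := by
      rw [key]; field_simp
    linear_combination key' + q^2 * ih

lemma Jh_closed (hq : 1 < q) (t : ℕ) : Jh q t = Jh q 0 / (q^2)^t := by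
  have hq0 : q ≠ 0 := by nlinarith
  induction t with
  | zero => simp
  | succ t ih =>
    have h1 := Jstep hq t
    have h2 : Jh q (t+1) = Jh q t / q^2 := by rw [← h1]; field_simp
    rw [h2, ih, div_div, ← pow_succ]

lemma Jh_closed2 {q : ℝ} (hq : 1 < q) (t : ℕ) :
    (∫ θ in (0:ℝ)..π, Real.cos (2*(t:ℝ)*θ) / ((q^2+1)^2 - 4*q^2*Real.cos θ^2))
      = (∫ θ in (0:ℝ)..π, Real.cos (2*((0:ℕ):ℝ)*θ) / ((q^2+1)^2 - 4*q^2*Real.cos θ^2)) / (q^2)^t :=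
  Jh_closed hq t

lemma sinsin (a b θ : ℝ) :
    Real.sin (a*θ) * Real.sin (b*θ) = (Real.cos ((a-b)*θ) - Real.cos ((a+b)*θ))/2 := by
  rw [show (a-b)*θ = a*θ - b*θ by ring, show (a+b)*θ = a*θ + b*θ by ring,
    Real.cos_sub, Real.cos_add]
  ring

lemma int_comb (hq : 1 < q) (c0 c1 c2 c3 c4 c5 : ℝ) (t0 t1 t2 t3 t4 t5 : ℕ) :
    ∫ θ in (0:ℝ)..π,
      (c0 * (Real.cos (2*(t0:ℝ)*θ) / ((q^2+1)^2 - 4*q^2*Real.cos θ^2))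
       + c1 * (Real.cos (2*(t1:ℝ)*θ) / ((q^2+1)^2 - 4*q^2*Real.cos θ^2))
       + c2 * (Real.cos (2*(t2:ℝ)*θ) / ((q^2+1)^2 - 4*q^2*Real.cos θ^2))
       + c3 * (Real.cos (2*(t3:ℝ)*θ) / ((q^2+1)^2 - 4*q^2*Real.cos θ^2))
       + c4 * (Real.cos (2*(t4:ℝ)*θ) / ((q^2+1)^2 - 4*q^2*Real.cos θ^2))
       + c5 * (Real.cos (2*(t5:ℝ)*θ) / ((q^2+1)^2 - 4*q^2*Real.cos θ^2)))
      = (∫ θ in (0:ℝ)..π, Real.cos (2*((0:ℕ):ℝ)*θ) / ((q^2+1)^2 - 4*q^2*Real.cos θ^2))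
        * (c0 / (q^2)^t0 + c1 / (q^2)^t1 + c2 / (q^2)^t2 + c3 / (q^2)^t3
           + c4 / (q^2)^t4 + c5 / (q^2)^t5) := by
  have I : ∀ (c : ℝ) (t : ℕ), IntervalIntegrable
      (fun θ => c * (Real.cos (2*(t:ℝ)*θ) / ((q^2+1)^2 - 4*q^2*Real.cos θ^2))) volume 0 π :=
    fun c t => (cosInt hq _).const_mul c
  rw [intervalIntegral.integral_add (((((I c0 t0).add (I c1 t1)).add (I c2 t2)).add
      (I c3 t3)).add (I c4 t4)) (I c5 t5),
    intervalIntegral.integral_add ((((I c0 t0).add (I c1 t1)).add (I c2 t2)).add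
      (I c3 t3)) (I c4 t4),
    intervalIntegral.integral_add (((I c0 t0).add (I c1 t1)).add (I c2 t2)) (I c3 t3),
    intervalIntegral.integral_add ((I c0 t0).add (I c1 t1)) (I c2 t2),
    intervalIntegral.integral_add (I c0 t0) (I c1 t1)]
  simp only [intervalIntegral.integral_const_mul]
  rw [Jh_closed2 hq t0, Jh_closed2 hq t1, Jh_closed2 hq t2, Jh_closed2 hq t3,
    Jh_closed2 hq t4, Jh_closed2 hq t5]
  ring

lemma main_pos (hq : 1 < q) (b e' : ℕ) :
    ∫ θ in (0:ℝ)..π,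
      (q^(b+2*e'+5) * Real.sin (((b:ℝ)+2*e'+4)*θ) - q^(b+2*e'+3) * Real.sin (((b:ℝ)+2*e'+2)*θ))
      * (q^(b+3) * Real.sin (((b:ℝ)+2)*θ) - q^(b+1) * Real.sin ((b:ℝ)*θ))
      / ((q^2+1)^2 - 4*q^2*Real.cos θ^2) = 0 := by
  have hq0 : q ≠ 0 := by nlinarith
  have congr1 : EqOn
      (fun θ => (q^(b+2*e'+5) * Real.sin (((b:ℝ)+2*e'+4)*θ)
          - q^(b+2*e'+3) * Real.sin (((b:ℝ)+2*e'+2)*θ))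
        * (q^(b+3) * Real.sin (((b:ℝ)+2)*θ) - q^(b+1) * Real.sin ((b:ℝ)*θ))
        / ((q^2+1)^2 - 4*q^2*Real.cos θ^2))
      (fun θ =>
        ((q^(2*b+2*e'+8) + q^(2*b+2*e'+4))/2) * (Real.cos (2*((e'+1 : ℕ):ℝ)*θ) / ((q^2+1)^2 - 4*q^2*Real.cos θ^2))
        + (-q^(2*b+2*e'+8)/2) * (Real.cos (2*((b+e'+3 : ℕ):ℝ)*θ) / ((q^2+1)^2 - 4*q^2*Real.cos θ^2))
        + (-q^(2*b+2*e'+6)/2) * (Real.cos (2*((e'+2 : ℕ):ℝ)*θ) / ((q^2+1)^2 - 4*q^2*Real.cos θ^2))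
        + (-q^(2*b+2*e'+6)/2) * (Real.cos (2*((e' : ℕ):ℝ)*θ) / ((q^2+1)^2 - 4*q^2*Real.cos θ^2))
        + (q^(2*b+2*e'+6)) * (Real.cos (2*((b+e'+2 : ℕ):ℝ)*θ) / ((q^2+1)^2 - 4*q^2*Real.cos θ^2))
        + (-q^(2*b+2*e'+4)/2) * (Real.cos (2*((b+e'+1 : ℕ):ℝ)*θ) / ((q^2+1)^2 - 4*q^2*Real.cos θ^2)))
      (uIcc 0 π) := by
    intro θ _
    have h13 := sinsin ((b:ℝ)+2*e'+4) ((b:ℝ)+2) θ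
    have h14 := sinsin ((b:ℝ)+2*e'+4) ((b:ℝ)) θ
    have h23 := sinsin ((b:ℝ)+2*e'+2) ((b:ℝ)+2) θ
    have h24 := sinsin ((b:ℝ)+2*e'+2) ((b:ℝ)) θ
    rw [show ((b:ℝ)+2*e'+4) - ((b:ℝ)+2) = 2*((e':ℝ)+1) by ring,
      show ((b:ℝ)+2*e'+4) + ((b:ℝ)+2) = 2*((b:ℝ)+(e':ℝ)+3) by ring] at h13
    rw [show ((b:ℝ)+2*e'+4) - (b:ℝ) = 2*((e':ℝ)+2) by ring,
      show ((b:ℝ)+2*e'+4) + (b:ℝ) = 2*((b:ℝ)+(e':ℝ)+2) by ring] at h14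
    rw [show ((b:ℝ)+2*e'+2) - ((b:ℝ)+2) = 2*(e':ℝ) by ring,
      show ((b:ℝ)+2*e'+2) + ((b:ℝ)+2) = 2*((b:ℝ)+(e':ℝ)+2) by ring] at h23
    rw [show ((b:ℝ)+2*e'+2) - (b:ℝ) = 2*((e':ℝ)+1) by ring,
      show ((b:ℝ)+2*e'+2) + (b:ℝ) = 2*((b:ℝ)+(e':ℝ)+1) by ring] at h24
    dsimp only
    push_cast
    linear_combination (norm := ring)
      (q^(b+2*e'+5) * q^(b+3) * ((q^2+1)^2 - 4*q^2*Real.cos θ^2)⁻¹) * h13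
      - (q^(b+2*e'+5) * q^(b+1) * ((q^2+1)^2 - 4*q^2*Real.cos θ^2)⁻¹) * h14
      - (q^(b+2*e'+3) * q^(b+3) * ((q^2+1)^2 - 4*q^2*Real.cos θ^2)⁻¹) * h23
      + (q^(b+2*e'+3) * q^(b+1) * ((q^2+1)^2 - 4*q^2*Real.cos θ^2)⁻¹) * h24
  rw [intervalIntegral.integral_congr congr1, int_comb hq]
  have hz : ((q^(2*b+2*e'+8) + q^(2*b+2*e'+4))/2) / (q^2)^(e'+1)
      + (-q^(2*b+2*e'+8)/2) / (q^2)^(b+e'+3)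
      + (-q^(2*b+2*e'+6)/2) / (q^2)^(e'+2)
      + (-q^(2*b+2*e'+6)/2) / (q^2)^(e')
      + (q^(2*b+2*e'+6)) / (q^2)^(b+e'+2)
      + (-q^(2*b+2*e'+4)/2) / (q^2)^(b+e'+1) = 0 := by
    field_simp
    ring
  rw [hz, mul_zero]

lemma main_zero (hq : 1 < q) (e' : ℕ) :
    ∫ θ in (0:ℝ)..π,
      (q^(2*e'+5) * Real.sin ((2*(e':ℝ)+3)*θ) - q^(2*e'+3) * Real.sin ((2*(e':ℝ)+1)*θ))
      * (q^2 * Real.sin θ) / ((q^2+1)^2 - 4*q^2*Real.cos θ^2) = 0 := by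
  have hq0 : q ≠ 0 := by nlinarith
  have congr1 : EqOn
      (fun θ => (q^(2*e'+5) * Real.sin ((2*(e':ℝ)+3)*θ) - q^(2*e'+3) * Real.sin ((2*(e':ℝ)+1)*θ))
        * (q^2 * Real.sin θ) / ((q^2+1)^2 - 4*q^2*Real.cos θ^2))
      (fun θ =>
        ((q^(2*e'+7) + q^(2*e'+5))/2) * (Real.cos (2*((e'+1 : ℕ):ℝ)*θ) / ((q^2+1)^2 - 4*q^2*Real.cos θ^2))
        + (-q^(2*e'+7)/2) * (Real.cos (2*((e'+2 : ℕ):ℝ)*θ) / ((q^2+1)^2 - 4*q^2*Real.cos θ^2))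
        + (-q^(2*e'+5)/2) * (Real.cos (2*((e' : ℕ):ℝ)*θ) / ((q^2+1)^2 - 4*q^2*Real.cos θ^2))
        + 0 * (Real.cos (2*((0 : ℕ):ℝ)*θ) / ((q^2+1)^2 - 4*q^2*Real.cos θ^2))
        + 0 * (Real.cos (2*((0 : ℕ):ℝ)*θ) / ((q^2+1)^2 - 4*q^2*Real.cos θ^2))
        + 0 * (Real.cos (2*((0 : ℕ):ℝ)*θ) / ((q^2+1)^2 - 4*q^2*Real.cos θ^2)))
      (uIcc 0 π) := by
    intro θ _
    have h1 := sinsin (2*(e':ℝ)+3) 1 θ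
    have h2 := sinsin (2*(e':ℝ)+1) 1 θ
    rw [one_mul, show (2*(e':ℝ)+3) - 1 = 2*((e':ℝ)+1) by ring,
      show (2*(e':ℝ)+3) + 1 = 2*((e':ℝ)+2) by ring] at h1
    rw [one_mul, show (2*(e':ℝ)+1) - 1 = 2*(e':ℝ) by ring,
      show (2*(e':ℝ)+1) + 1 = 2*((e':ℝ)+1) by ring] at h2
    dsimp only
    push_cast
    linear_combination (norm := ring)
      (q^(2*e'+5) * q^2 * ((q^2+1)^2 - 4*q^2*Real.cos θ^2)⁻¹) * h1
      - (q^(2*e'+3) * q^2 * ((q^2+1)^2 - 4*q^2*Real.cos θ^2)⁻¹) * h2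
  rw [intervalIntegral.integral_congr congr1, int_comb hq]
  have hz : ((q^(2*e'+7) + q^(2*e'+5))/2) / (q^2)^(e'+1)
      + (-q^(2*e'+7)/2) / (q^2)^(e'+2)
      + (-q^(2*e'+5)/2) / (q^2)^(e')
      + (0:ℝ) / (q^2)^(0:ℕ) + 0 / (q^2)^(0:ℕ) + 0 / (q^2)^(0:ℕ) = 0 := by
    field_simp
    ring
  rw [hz, mul_zero]

lemma int_cos_nat2 (n : ℕ) (hn : n ≠ 0) : ∫ θ in (0:ℝ)..π, Real.cos ((n:ℝ) * θ) = 0 :=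
  int_cos_zero (Nat.cast_ne_zero.mpr hn) (Real.sin_nat_mul_pi n)

lemma conv_Ioo (f : ℝ → ℝ) : ∫ θ in Ioo (0:ℝ) π, f θ = ∫ θ in (0:ℝ)..π, f θ := by
  rw [intervalIntegral.integral_of_le Real.pi_pos.le, ← integral_Ioc_eq_integral_Ioo]

lemma coscos (a b θ : ℝ) :
    Real.cos (a*θ) * Real.cos (b*θ) = (Real.cos ((a+b)*θ) + Real.cos ((a-b)*θ))/2 := by
  rw [show (a-b)*θ = a*θ - b*θ by ring, show (a+b)*θ = a*θ + b*θ by ring,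
    Real.cos_sub, Real.cos_add]
  ring

lemma key (k : ℕ) (hk : 2 ≤ k) (i j : ℕ) (hji : j < i) (hpar : Even (i + j)) :
    ∫ x in (-(2 * Real.sqrt ((k : ℝ) - 1)))..(2 * Real.sqrt ((k : ℝ) - 1)),
      (treeF (k : ℝ) i).eval x * (treeF (k : ℝ) j).eval x *
        (Real.sqrt (4 * ((k : ℝ) - 1) - x ^ 2) / ((k : ℝ) ^ 2 - x ^ 2)) = 0 := by
  have hk1 : (1:ℝ) ≤ (k:ℝ) - 1 := by
    have : (2:ℝ) ≤ (k:ℝ) := by exact_mod_cast hk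
    linarith
  generalize hqdef : Real.sqrt ((k:ℝ) - 1) = q
  have hq2 : q^2 = (k:ℝ) - 1 := by rw [← hqdef]; exact Real.sq_sqrt (by linarith)
  have hqpos : 0 < q := by rw [← hqdef]; exact Real.sqrt_pos.mpr (by linarith)
  have hq0 : q ≠ 0 := hqpos.ne'
  have hkq : (k:ℝ) = q^2 + 1 := by rw [hq2]; ring
  rw [subst_lemma (2*q) (by linarith) _]
  obtain ⟨r, hr⟩ := hpar
  rcases Nat.lt_or_ge k 3 with hk2 | hk3
  · -- k = 2 case
    have hkk : k = 2 := by omega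
    have hqone : q = 1 := by
      rw [← hqdef, hkk]; norm_num
    have hFi : ∀ (n : ℕ) (θ : ℝ), 0 < Real.sin θ →
        (treeF (k:ℝ) (n+1)).eval (2 * q * Real.cos θ) = 2 * Real.cos (((n:ℝ)+1) * θ) := by
      intro n θ hs
      have h := treeF_eval_trig q n θ
      rw [hqone] at h ⊢
      norm_num at h
      rw [hkq, hqone] at *
      norm_num
      apply mul_right_cancel₀ hs.ne'
      rw [h]
      have : Real.sin (((n:ℝ)+2)*θ) = 2 * Real.cos (((n:ℝ)+1)*θ) * Real.sin θ
          + Real.sin ((n:ℝ)*θ) := by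
        rw [show ((n:ℝ)+2)*θ = ((n:ℝ)+1)*θ + θ by ring,
          show (n:ℝ)*θ = ((n:ℝ)+1)*θ - θ by ring, Real.sin_add, Real.sin_sub]
        ring
      rw [this]
      ring
    obtain ⟨i', rfl⟩ : ∃ i', i = i' + 1 := ⟨i - 1, by omega⟩
    rcases Nat.eq_zero_or_pos j with hj0 | hjpos
    · subst hj0
      have congr1 : EqOn (fun θ => ((2*q) * Real.sin θ) *
            ((treeF (k:ℝ) (i'+1)).eval ((2*q) * Real.cos θ) * (treeF (k:ℝ) 0).eval ((2*q) * Real.cos θ) *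
            (Real.sqrt (4 * ((k:ℝ)-1) - ((2*q) * Real.cos θ)^2) / ((k:ℝ)^2 - ((2*q) * Real.cos θ)^2))))
          (fun θ => 2 * Real.cos (((i':ℝ)+1) * θ)) (Ioo 0 π) := by
        intro θ hθ
        have hs : 0 < Real.sin θ := Real.sin_pos_of_pos_of_lt_pi hθ.1 hθ.2
        have hsc := Real.sin_sq_add_cos_sq θ
        have hsqrt : Real.sqrt (4 * ((k:ℝ)-1) - ((2*q) * Real.cos θ)^2) = 2 * Real.sin θ := by
          rw [hqone]
          rw [show 4 * ((k:ℝ)-1) - ((2*1) * Real.cos θ)^2 = (2 * Real.sin θ)^2 by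
            rw [hkq, hqone]; nlinarith [hsc]]
          exact Real.sqrt_sq (by linarith)
        dsimp only
        rw [hFi i' θ hs, hsqrt, show (treeF (k:ℝ) 0) = 1 from rfl, eval_one]
        rw [hkq, hqone]
        have hden : ((1:ℝ)^2+1)^2 - ((2*1) * Real.cos θ)^2 = 4 * Real.sin θ^2 := by
          nlinarith [hsc]
        rw [hden]
        have hs2 : Real.sin θ^2 ≠ 0 := by positivity
        field_simp
        ring
      rw [setIntegral_congr_fun measurableSet_Ioo congr1, conv_Ioo]
      have : ∫ θ in (0:ℝ)..π, 2 * Real.cos (((i':ℝ)+1) * θ)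
          = 2 * ∫ θ in (0:ℝ)..π, Real.cos (((i'+1:ℕ):ℝ) * θ) := by
        rw [intervalIntegral.integral_const_mul]
        norm_num
      rw [this, int_cos_nat2 (i'+1) (Nat.succ_ne_zero i'), mul_zero]
    · obtain ⟨j', rfl⟩ : ∃ j', j = j' + 1 := ⟨j - 1, by omega⟩
      have congr1 : EqOn (fun θ => ((2*q) * Real.sin θ) *
            ((treeF (k:ℝ) (i'+1)).eval ((2*q) * Real.cos θ) * (treeF (k:ℝ) (j'+1)).eval ((2*q) * Real.cos θ) *
            (Real.sqrt (4 * ((k:ℝ)-1) - ((2*q) * Real.cos θ)^2) / ((k:ℝ)^2 - ((2*q) * Real.cos θ)^2))))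
          (fun θ => (2 * Real.cos (((i':ℝ)+1) * θ)) * (2 * Real.cos (((j':ℝ)+1) * θ))) (Ioo 0 π) := by
        intro θ hθ
        have hs : 0 < Real.sin θ := Real.sin_pos_of_pos_of_lt_pi hθ.1 hθ.2
        have hsc := Real.sin_sq_add_cos_sq θ
        have hsqrt : Real.sqrt (4 * ((k:ℝ)-1) - ((2*q) * Real.cos θ)^2) = 2 * Real.sin θ := by
          rw [hqone]
          rw [show 4 * ((k:ℝ)-1) - ((2*1) * Real.cos θ)^2 = (2 * Real.sin θ)^2 by
            rw [hkq, hqone]; nlinarith [hsc]]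
          exact Real.sqrt_sq (by linarith)
        dsimp only
        rw [hFi i' θ hs, hFi j' θ hs, hsqrt]
        rw [hkq, hqone]
        have hden : ((1:ℝ)^2+1)^2 - ((2*1) * Real.cos θ)^2 = 4 * Real.sin θ^2 := by
          nlinarith [hsc]
        rw [hden]
        have hs2 : Real.sin θ^2 ≠ 0 := by positivity
        field_simp
        ring
      rw [setIntegral_congr_fun measurableSet_Ioo congr1, conv_Ioo]
      have congr2 : EqOn (fun θ => (2 * Real.cos (((i':ℝ)+1) * θ)) * (2 * Real.cos (((j':ℝ)+1) * θ)))
          (fun θ => 2 * Real.cos (((i'+j'+2:ℕ):ℝ) * θ) + 2 * Real.cos (((i'-j':ℕ):ℝ) * θ))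
          (uIcc 0 π) := by
        intro θ _
        have h := coscos ((i':ℝ)+1) ((j':ℝ)+1) θ
        dsimp only
        rw [show ((i'+j'+2:ℕ):ℝ) = ((i':ℝ)+1) + ((j':ℝ)+1) by push_cast; ring,
          show ((i'-j':ℕ):ℝ) = ((i':ℝ)+1) - ((j':ℝ)+1) by
            rw [Nat.cast_sub (by omega)]; push_cast; ring]
        linear_combination 4*h
      rw [intervalIntegral.integral_congr congr2,
        intervalIntegral.integral_add (by apply Continuous.intervalIntegrable; fun_prop)
          (by apply Continuous.intervalIntegrable; fun_prop),
        intervalIntegral.integral_const_mul, intervalIntegral.integral_const_mul,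
        int_cos_nat2 (i'+j'+2) (by omega), int_cos_nat2 (i'-j') (by omega)]
      norm_num
  · -- k ≥ 3 case
    have hq1 : 1 < q := by
      have h3 : (3:ℝ) ≤ (k:ℝ) := by exact_mod_cast hk3
      nlinarith [hq2, hqpos]
    have hD0' : ∀ θ : ℝ, ((q^2+1)^2 - (2*q*Real.cos θ)^2) ≠ 0 := by
      intro θ
      have h : (q^2+1)^2 - (2*q*Real.cos θ)^2 = (q^2+1)^2 - 4*q^2*Real.cos θ^2 := by ring
      rw [h]
      exact (hD_pos hq1 θ).ne'
    rcases Nat.eq_zero_or_pos j with hj0 | hjpos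
    · -- j = 0, i = 2e+2
      subst hj0
      obtain ⟨e, rfl⟩ : ∃ e, i = 2*e + 2 := ⟨r - 1, by omega⟩
      have hPi : ∀ θ : ℝ, q^(2*e+5) * Real.sin ((2*(e:ℝ)+3)*θ) - q^(2*e+3) * Real.sin ((2*(e:ℝ)+1)*θ)
          = q * (q^2 * ((treeF (q^2+1) (2*e+2)).eval (2 * q * Real.cos θ) * Real.sin θ)) := by
        intro θ
        have h := treeF_eval_trig q (2*e+1) θ
        push_cast at h
        linear_combination (norm := ring_nf) (-q) * h
      have congr1 : EqOn (fun θ => ((2*q) * Real.sin θ) *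
            ((treeF (k:ℝ) (2*e+2)).eval ((2*q) * Real.cos θ) * (treeF (k:ℝ) 0).eval ((2*q) * Real.cos θ) *
            (Real.sqrt (4 * ((k:ℝ)-1) - ((2*q) * Real.cos θ)^2) / ((k:ℝ)^2 - ((2*q) * Real.cos θ)^2))))
          (fun θ => (4/q^3) *
            ((q^(2*e+5) * Real.sin ((2*(e:ℝ)+3)*θ) - q^(2*e+3) * Real.sin ((2*(e:ℝ)+1)*θ))
            * (q^2 * Real.sin θ) / ((q^2+1)^2 - 4*q^2*Real.cos θ^2))) (Ioo 0 π) := by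
        intro θ hθ
        have hs : 0 < Real.sin θ := Real.sin_pos_of_pos_of_lt_pi hθ.1 hθ.2
        have hsc := Real.sin_sq_add_cos_sq θ
        have hsqrt : Real.sqrt (4 * ((q^2+1:ℝ)-1) - ((2*q) * Real.cos θ)^2) = 2 * q * Real.sin θ := by
          rw [show 4 * ((q^2+1:ℝ)-1) - ((2*q) * Real.cos θ)^2 = (2 * q * Real.sin θ)^2 by
            linear_combination (-(4*q^2)) * hsc]
          exact Real.sqrt_sq (mul_nonneg (by linarith) hs.le)
        dsimp only
        rw [hkq, hsqrt, hPi θ, show (treeF (q^2+1) 0) = 1 from rfl, eval_one,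
          show (q^2+1)^2 - (2*q*Real.cos θ)^2 = (q^2+1)^2 - 4*q^2*Real.cos θ^2 from by ring]
        have hD0 := (hD_pos hq1 θ).ne'
        field_simp
        ring
      rw [setIntegral_congr_fun measurableSet_Ioo congr1, conv_Ioo,
        intervalIntegral.integral_const_mul, main_zero hq1 e, mul_zero]
    · -- j = b+1, i = b+2e+3
      obtain ⟨b, e, rfl, rfl⟩ : ∃ b e, j = b+1 ∧ i = b+2*e+3 :=
        ⟨j-1, (i-j)/2-1, by omega, by omega⟩
      have hPi : ∀ θ : ℝ, q^(b+2*e+5) * Real.sin (((b:ℝ)+2*e+4)*θ)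
            - q^(b+2*e+3) * Real.sin (((b:ℝ)+2*e+2)*θ)
          = q^2 * ((treeF (q^2+1) (b+2*e+3)).eval (2 * q * Real.cos θ) * Real.sin θ) := by
        intro θ
        have h := treeF_eval_trig q (b+2*e+2) θ
        push_cast at h
        linear_combination (norm := ring_nf) (-1 : ℝ) * h
      have hPj : ∀ θ : ℝ, q^(b+3) * Real.sin (((b:ℝ)+2)*θ) - q^(b+1) * Real.sin ((b:ℝ)*θ)
          = q^2 * ((treeF (q^2+1) (b+1)).eval (2 * q * Real.cos θ) * Real.sin θ) :=
        fun θ => (treeF_eval_trig q b θ).symm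
      have congr1 : EqOn (fun θ => ((2*q) * Real.sin θ) *
            ((treeF (k:ℝ) (b+2*e+3)).eval ((2*q) * Real.cos θ) * (treeF (k:ℝ) (b+1)).eval ((2*q) * Real.cos θ) *
            (Real.sqrt (4 * ((k:ℝ)-1) - ((2*q) * Real.cos θ)^2) / ((k:ℝ)^2 - ((2*q) * Real.cos θ)^2))))
          (fun θ => (4/q^2) *
            ((q^(b+2*e+5) * Real.sin (((b:ℝ)+2*e+4)*θ) - q^(b+2*e+3) * Real.sin (((b:ℝ)+2*e+2)*θ))
            * (q^(b+3) * Real.sin (((b:ℝ)+2)*θ) - q^(b+1) * Real.sin ((b:ℝ)*θ))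
            / ((q^2+1)^2 - 4*q^2*Real.cos θ^2))) (Ioo 0 π) := by
        intro θ hθ
        have hs : 0 < Real.sin θ := Real.sin_pos_of_pos_of_lt_pi hθ.1 hθ.2
        have hsc := Real.sin_sq_add_cos_sq θ
        have hsqrt : Real.sqrt (4 * ((q^2+1:ℝ)-1) - ((2*q) * Real.cos θ)^2) = 2 * q * Real.sin θ := by
          rw [show 4 * ((q^2+1:ℝ)-1) - ((2*q) * Real.cos θ)^2 = (2 * q * Real.sin θ)^2 by
            linear_combination (-(4*q^2)) * hsc]
          exact Real.sqrt_sq (mul_nonneg (by linarith) hs.le)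
        dsimp only
        rw [hkq, hsqrt, hPi θ, hPj θ,
          show (q^2+1)^2 - (2*q*Real.cos θ)^2 = (q^2+1)^2 - 4*q^2*Real.cos θ^2 from by ring]
        have hD0 := (hD_pos hq1 θ).ne'
        field_simp
        ring
      rw [setIntegral_congr_fun measurableSet_Ioo congr1, conv_Ioo,
        intervalIntegral.integral_const_mul, main_pos hq1 b e, mul_zero]

open MeasureTheory in
theorem treeF_orthogonal (k : ℕ) (hk : 2 ≤ k) (i j : ℕ) (hij : i ≠ j) :
    ∫ x in (-(2 * Real.sqrt ((k : ℝ) - 1)))..(2 * Real.sqrt ((k : ℝ) - 1)),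
      (treeF (k : ℝ) i).eval x * (treeF (k : ℝ) j).eval x *
        (Real.sqrt (4 * ((k : ℝ) - 1) - x ^ 2) / ((k : ℝ) ^ 2 - x ^ 2)) = 0 := by
  rcases Nat.even_or_odd (i + j) with hpar | hpar
  · rcases Nat.lt_or_ge j i with h | h
    · exact key k hk i j h hpar
    · have h' : i < j := by omega
      have hswap := key k hk j i h' (by rwa [Nat.add_comm] at hpar)
      rw [← hswap]
      apply intervalIntegral.integral_congr
      intro x _
      dsimp only
      ring
  · set c := 2 * Real.sqrt ((k:ℝ) - 1) with hc
    set g : ℝ → ℝ := fun x => (treeF (k : ℝ) i).eval x * (treeF (k : ℝ) j).eval x *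
        (Real.sqrt (4 * ((k : ℝ) - 1) - x ^ 2) / ((k : ℝ) ^ 2 - x ^ 2)) with hg
    have hodd : ∀ x, g (-x) = - g x := by
      intro x
      simp only [hg]
      rw [treeF_eval_neg (k:ℝ) i, treeF_eval_neg (k:ℝ) j]
      simp only [neg_sq]
      rw [show ((-1:ℝ)^i * (treeF (k:ℝ) i).eval x) * ((-1:ℝ)^j * (treeF (k:ℝ) j).eval x) *
          (Real.sqrt (4 * ((k : ℝ) - 1) - x ^ 2) / ((k : ℝ) ^ 2 - x ^ 2))
          = ((-1:ℝ)^(i+j)) * ((treeF (k:ℝ) i).eval x * (treeF (k:ℝ) j).eval x *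
          (Real.sqrt (4 * ((k : ℝ) - 1) - x ^ 2) / ((k : ℝ) ^ 2 - x ^ 2))) from by
        rw [pow_add]; ring]
      rw [Odd.neg_one_pow hpar]
      ring
    have hmain := intervalIntegral.integral_comp_neg (a := -c) (b := c) g
    simp only [neg_neg] at hmain
    have h1 : ∫ x in (-c)..c, g (-x) = - ∫ x in (-c)..c, g x := by
      rw [intervalIntegral.integral_congr (g := fun x => -g x) (fun x _ => hodd x),
        intervalIntegral.integral_neg]
    rw [h1] at hmain
    linarith
end

section
/- Let G be a connected k-regular simple graph with adjacency matrix A. Then the (u,v)-entry of F_i^{(k)}(A) equals the number of irreducible paths of length i from u to v, where a path is irreducible if it contains no subsequence of the form u_j ~ u_{j+1} ~ u_j. -/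
set_option linter.unusedSectionVars false

open Polynomial

section IrrPaths

variable {V : Type} [Fintype V] [DecidableEq V] (G : SimpleGraph V) [DecidableRel G.Adj]

def IrrP (i : ℕ) (u v : V) : Type :=
  {p : ℕ → V // p 0 = u ∧ (∀ j, j < i → G.Adj (p j) (p (j + 1))) ∧
    (∀ j, i ≤ j → p j = v) ∧ (∀ j, j + 2 ≤ i → p j ≠ p (j + 2))}

instance IrrP.finite (i : ℕ) (u v : V) : Finite (IrrP G i u v) := by
  apply Finite.of_injective (fun p : IrrP G i u v => (fun j : Fin (i + 1) => p.1 j))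
  rintro ⟨p, hp0, hpa, hpc, hpi⟩ ⟨q, hq0, hqa, hqc, hqi⟩ h
  refine Subtype.ext (funext fun j => ?_)
  show p j = q j
  rcases le_or_gt i j with hij | hij
  · rw [hpc j hij, hqc j hij]
  · exact congrFun h ⟨j, by omega⟩

noncomputable def nIrr (i : ℕ) (u v : V) : ℝ := Nat.card (IrrP G i u v)

noncomputable def sIrr (i : ℕ) (u v w : V) : ℝ :=
  Nat.card {p : IrrP G i u v // p.1 1 = w}

lemma my_card_sigma {ι : Type} [Fintype ι] (f : ι → Type) [∀ i, Finite (f i)] :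
    Nat.card (Σ i, f i) = ∑ i, Nat.card (f i) := by
  have := fun i => Fintype.ofFinite (f i)
  simp [Nat.card_eq_fintype_card]

/-- splitting by whether the second vertex is `w` -/
lemma nIrr_split (i : ℕ) (u v w : V) :
    nIrr G i u v = sIrr G i u v w + (Nat.card {p : IrrP G i u v // p.1 1 ≠ w} : ℝ) := by
  classical
  rw [nIrr, sIrr, ← Nat.card_congr (Equiv.sumCompl (fun p : IrrP G i u v => p.1 1 = w)),
    Nat.card_sum]
  push_cast
  ring

/-- fiber decomposition over the second vertex -/
lemma nIrr_fiber (i : ℕ) (u v : V) :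
    nIrr G (i + 1) u v = ∑ w : {w // G.Adj u w}, sIrr G (i + 1) u v w.1 := by
  classical
  have e : IrrP G (i + 1) u v ≃
      Σ w : {w // G.Adj u w}, {p : IrrP G (i + 1) u v // p.1 1 = w.1} :=
    { toFun := fun p => ⟨⟨p.1 1, by have h := p.2.2.1 0 (Nat.succ_pos i); rwa [p.2.1] at h⟩, ⟨p, rfl⟩⟩
      invFun := fun x => x.2.1
      left_inv := fun p => rfl
      right_inv := by
        rintro ⟨⟨w, hw⟩, p, hp⟩
        have hp' : p.1 1 = w := hp
        subst hp'
        rfl }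
  rw [nIrr, Nat.card_congr e, my_card_sigma]
  push_cast
  rfl

lemma nIrr_zero (u v : V) : nIrr G 0 u v = if u = v then 1 else 0 := by
  rw [nIrr]
  split_ifs with h
  · subst h
    have : Unique (IrrP G 0 u u) :=
      { default := ⟨fun _ => u, rfl, fun j hj => by omega, fun j _ => rfl, fun j hj => by omega⟩
        uniq := fun p => Subtype.ext (funext fun j => p.2.2.2.1 j (Nat.zero_le j)) }
    simp [Nat.card_unique]
  · have : IsEmpty (IrrP G 0 u v) :=
      ⟨fun p => h (p.2.1.symm.trans (p.2.2.2.1 0 le_rfl))⟩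
    simp [Nat.card_of_isEmpty]

lemma nIrr_one (u v : V) : nIrr G 1 u v = if G.Adj u v then 1 else 0 := by
  rw [nIrr]
  split_ifs with h
  · have : Unique (IrrP G 1 u v) :=
      { default := ⟨fun j => Nat.casesOn j u (fun _ => v), rfl,
          fun j hj => by interval_cases j; exact h,
          fun j hj => by cases j with | zero => omega | succ j => rfl,
          fun j hj => by omega⟩
        uniq := fun p => by
          refine Subtype.ext (funext fun j => ?_)
          rcases j with _ | j
          · exact p.2.1
          · exact p.2.2.2.1 (j + 1) (by omega) }
    simp [Nat.card_unique]
  · have : IsEmpty (IrrP G 1 u v) := by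
      refine ⟨fun p => h ?_⟩
      have h0 := p.2.2.1 0 Nat.one_pos
      rwa [p.2.1, p.2.2.2.1 1 le_rfl] at h0
    simp [Nat.card_of_isEmpty]

lemma sIrr_zero (u v w : V) : sIrr G 0 u v w = if u = v ∧ v = w then 1 else 0 := by
  rw [sIrr]
  split_ifs with h
  · obtain ⟨rfl, rfl⟩ := h
    have : Unique {p : IrrP G 0 u u // p.1 1 = u} :=
      { default := ⟨⟨fun _ => u, rfl, fun j hj => by omega, fun j _ => rfl,
          fun j hj => by omega⟩, rfl⟩
        uniq := fun p => by
          refine Subtype.ext (Subtype.ext (funext fun j => ?_))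
          exact p.1.2.2.2.1 j (Nat.zero_le j) }
    simp [Nat.card_unique]
  · have : IsEmpty {p : IrrP G 0 u v // p.1 1 = w} := by
      refine ⟨fun p => h ⟨?_, ?_⟩⟩
      · exact p.1.2.1.symm.trans (p.1.2.2.2.1 0 le_rfl)
      · exact (p.1.2.2.2.1 1 (Nat.zero_le 1)).symm.trans p.2
    simp [Nat.card_of_isEmpty]

lemma sIrr_succ (i : ℕ) (u v w : V) (hadj : G.Adj u w) :
    sIrr G (i + 1) u v w = nIrr G i w v - sIrr G i w v u := by
  have e : {p : IrrP G (i + 1) u v // p.1 1 = w} ≃ {r : IrrP G i w v // r.1 1 ≠ u} := by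
    refine
      { toFun := fun q => ⟨⟨fun j => q.1.1 (j + 1), q.2,
          fun j hj => q.1.2.2.1 (j + 1) (by omega),
          fun j hj => q.1.2.2.2.1 (j + 1) (by omega),
          fun j hj => q.1.2.2.2.2 (j + 1) (by omega)⟩, ?_⟩
        invFun := fun r => ⟨⟨fun j => Nat.casesOn j u r.1.1, rfl, ?_, ?_, ?_⟩, r.1.2.1⟩
        left_inv := ?_
        right_inv := ?_ }
    · -- q.1.1 2 ≠ u
      show q.1.1 2 ≠ u
      rcases Nat.eq_zero_or_pos i with hi | hi
      · subst hi
        have h2 : q.1.1 2 = v := q.1.2.2.2.1 2 (by omega)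
        have hv : q.1.1 1 = v := q.1.2.2.2.1 1 le_rfl
        have hwv : w = v := q.2.symm.trans hv
        rw [h2, ← hwv]
        exact fun h => hadj.ne' h
      · intro h
        exact q.1.2.2.2.2 0 (by omega) (q.1.2.1.trans h.symm)
    · -- adjacency
      intro j hj
      cases j with
      | zero =>
        show G.Adj u (r.1.1 0)
        rw [r.1.2.1]; exact hadj
      | succ j => exact r.1.2.2.1 j (by omega)
    · -- constant
      intro j hj
      cases j with
      | zero => omega
      | succ j => exact r.1.2.2.2.1 j (by omega)
    · -- irreducible
      intro j hj
      cases j with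
      | zero => exact fun h => r.2 (h.symm)
      | succ j => exact r.1.2.2.2.2 j (by omega)
    · intro q
      refine Subtype.ext (Subtype.ext (funext fun j => ?_))
      cases j with
      | zero => exact q.1.2.1.symm
      | succ j => rfl
    · intro r
      rfl
  rw [sIrr, Nat.card_congr e, ← Nat.card_congr
    (Equiv.subtypeEquivRight (q := fun r : IrrP G i w v => ¬ r.1 1 = u) (fun r => Iff.rfl)),
    nIrr_split G i w v u]
  ring

lemma card_nbr (k : ℕ) (hreg : G.IsRegularOfDegree k) (u : V) :
    Fintype.card {w : V // G.Adj u w} = k := by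
  rw [Fintype.card_subtype, ← SimpleGraph.neighborFinset_eq_filter]
  exact hreg u

lemma sIrr_zero_adj (u v w : V) (hadj : G.Adj u w) : sIrr G 0 u v w = 0 := by
  rw [sIrr_zero, if_neg]
  rintro ⟨rfl, rfl⟩
  exact hadj.ne rfl

lemma nIrr_two (k : ℕ) (hreg : G.IsRegularOfDegree k) (u v : V) :
    nIrr G 2 u v = (∑ w : {w : V // G.Adj u w}, nIrr G 1 w.1 v) -
      (k : ℝ) * (if u = v then 1 else 0) := by
  have h1 : nIrr G 2 u v = ∑ w : {w : V // G.Adj u w}, sIrr G 2 u v w.1 :=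
    nIrr_fiber G 1 u v
  have h2 : ∀ w : {w : V // G.Adj u w}, sIrr G 2 u v w.1
      = nIrr G 1 w.1 v - nIrr G 0 u v := by
    intro w
    rw [sIrr_succ G 1 u v w.1 w.2, sIrr_succ G 0 w.1 v u w.2.symm,
      sIrr_zero_adj G u v w.1 w.2]
    ring
  rw [h1, Finset.sum_congr rfl (fun w _ => h2 w), Finset.sum_sub_distrib,
    Finset.sum_const, Finset.card_univ, card_nbr G k hreg u, nIrr_zero,
    nsmul_eq_mul]

lemma nIrr_rec (k : ℕ) (hreg : G.IsRegularOfDegree k) (i : ℕ) (u v : V) :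
    nIrr G (i + 3) u v = (∑ w : {w : V // G.Adj u w}, nIrr G (i + 2) w.1 v) -
      ((k : ℝ) - 1) * nIrr G (i + 1) u v := by
  have h1 : nIrr G (i + 3) u v = ∑ w : {w : V // G.Adj u w}, sIrr G (i + 3) u v w.1 :=
    nIrr_fiber G (i + 2) u v
  have h2 : ∀ w : {w : V // G.Adj u w}, sIrr G (i + 3) u v w.1
      = nIrr G (i + 2) w.1 v - (nIrr G (i + 1) u v - sIrr G (i + 1) u v w.1) := by
    intro w
    rw [sIrr_succ G (i + 2) u v w.1 w.2, sIrr_succ G (i + 1) w.1 v u w.2.symm]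
  rw [h1, Finset.sum_congr rfl (fun w _ => h2 w), Finset.sum_sub_distrib,
    Finset.sum_sub_distrib, Finset.sum_const, Finset.card_univ, card_nbr G k hreg u,
    ← nIrr_fiber G i u v, nsmul_eq_mul]
  ring

end IrrPaths

theorem treeF_adjMatrix_entry (V : Type) [Fintype V] [DecidableEq V]
    (G : SimpleGraph V) [DecidableRel G.Adj] (k : ℕ) (hk : 2 ≤ k)
    (hreg : G.IsRegularOfDegree k) (hconn : G.Connected) (i : ℕ) (u v : V) :
    (Polynomial.aeval (G.adjMatrix ℝ) (treeF (k : ℝ) i)) u v =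
      (Nat.card {p : ℕ → V // p 0 = u ∧ (∀ j, j < i → G.Adj (p j) (p (j + 1))) ∧
        (∀ j, i ≤ j → p j = v) ∧ (∀ j, j + 2 ≤ i → p j ≠ p (j + 2))} : ℝ) := by
  classical
  have key : ∀ i : ℕ, ∀ u v : V,
      (Polynomial.aeval (G.adjMatrix ℝ) (treeF (k : ℝ) i)) u v = nIrr G i u v := by
    intro i
    induction i using Nat.strong_induction_on with
    | _ i ih =>
      rcases i with _ | _ | _ | n
      · intro u v
        have htf : treeF (k : ℝ) 0 = 1 := rfl
        rw [htf, map_one, Matrix.one_apply, nIrr_zero]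
      · intro u v
        have htf : treeF (k : ℝ) 1 = X := rfl
        rw [htf, aeval_X, nIrr_one, SimpleGraph.adjMatrix_apply]
      · intro u v
        have htf : treeF (k : ℝ) 2 = X ^ 2 - C (k : ℝ) := rfl
        rw [htf, map_sub, map_pow, aeval_X, aeval_C, Matrix.sub_apply, sq,
          SimpleGraph.adjMatrix_mul_apply, Matrix.algebraMap_matrix_apply,
          Finset.sum_subtype (F := inferInstance) (G.neighborFinset u)
            (fun x => G.mem_neighborFinset u x) (fun w => (G.adjMatrix ℝ) w v),
          nIrr_two G k hreg u v]
        have : ∀ w : {w : V // G.Adj u w}, (G.adjMatrix ℝ) w.1 v = nIrr G 1 w.1 v := by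
          intro w
          rw [SimpleGraph.adjMatrix_apply, nIrr_one]
        rw [Finset.sum_congr rfl fun w _ => this w]
        by_cases h : u = v <;> simp [h, Algebra.algebraMap_self_apply]
      · intro u v
        have e2 : ∀ w : V, (Polynomial.aeval (G.adjMatrix ℝ) (treeF (k : ℝ) (n + 2))) w v
            = nIrr G (n + 2) w v := fun w => ih (n + 2) (by omega) w v
        have e1 := ih (n + 1) (by omega) u v
        have htf : treeF (k : ℝ) (n + 3)
            = X * treeF (k : ℝ) (n + 2) - C ((k : ℝ) - 1) * treeF (k : ℝ) (n + 1) := rfl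
        rw [htf, map_sub, map_mul, map_mul, aeval_X, aeval_C, ← Algebra.smul_def,
          Matrix.sub_apply, Matrix.smul_apply, smul_eq_mul,
          SimpleGraph.adjMatrix_mul_apply, e1,
          Finset.sum_subtype (F := inferInstance) (G.neighborFinset u)
            (fun x => G.mem_neighborFinset u x)
            (fun w => (Polynomial.aeval (G.adjMatrix ℝ) (treeF (k : ℝ) (n + 2))) w v),
          Finset.sum_congr rfl fun w _ => e2 w.1,
          nIrr_rec G k hreg n u v]
  exact key i u v
end

section
/- Let G be a connected k-regular simple graph with adjacency matrix A. Then tr(F_i^{(k)}(A)) ≥ 0 for all i ≥ 0. -/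
open Polynomial

namespace TreeFAux

open SimpleGraph Matrix Finset

lemma sum_ite_unique {α : Type} [Fintype α] [DecidableEq α] (P : α → Prop) [DecidablePred P]
    (a : α) (h : ∀ x, P x ↔ x = a) :
    (∑ x : α, if P x then (1 : ℝ) else 0) = 1 := by
  have : ∀ x : α, (if P x then (1 : ℝ) else 0) = if x = a then 1 else 0 := by
    intro x
    by_cases hx : P x
    · rw [if_pos hx, if_pos ((h x).mp hx)]
    · rw [if_neg hx, if_neg (fun he => hx ((h x).mpr he))]
  rw [Finset.sum_congr rfl fun x _ => this x, Finset.sum_ite_eq' Finset.univ,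
    if_pos (Finset.mem_univ a)]

lemma sum_ite_zero' {α : Type} [Fintype α] (P : α → Prop) [DecidablePred P]
    (h : ∀ x, ¬ P x) :
    (∑ x : α, if P x then (1 : ℝ) else 0) = 0 :=
  Finset.sum_eq_zero fun x _ => if_neg (h x)

variable {V : Type} [Fintype V] [DecidableEq V] (G : SimpleGraph V) [DecidableRel G.Adj]

/-- Start matrix: `SM u d = 1` iff dart `d` starts at `u`. -/
def SM : Matrix V G.Dart ℝ := fun u d => if d.fst = u then 1 else 0

/-- End matrix: `TM d v = 1` iff dart `d` ends at `v`. -/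
def TM : Matrix G.Dart V ℝ := fun d v => if d.snd = v then 1 else 0

/-- Hashimoto non-backtracking matrix on darts. -/
def BM : Matrix G.Dart G.Dart ℝ := fun d f => if f.fst = d.snd ∧ f.snd ≠ d.fst then 1 else 0

omit [Fintype V] [DecidableRel G.Adj] in
lemma SM_nonneg : ∀ u d, 0 ≤ SM G u d := by
  intro u d; unfold SM; split <;> norm_num

omit [Fintype V] [DecidableRel G.Adj] in
lemma TM_nonneg : ∀ d v, 0 ≤ TM G d v := by
  intro d v; unfold TM; split <;> norm_num

omit [Fintype V] [DecidableRel G.Adj] in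
lemma BM_nonneg : ∀ d f, 0 ≤ BM G d f := by
  intro d f; unfold BM; split <;> norm_num

lemma ST : SM G * TM G = G.adjMatrix ℝ := by
  ext u v
  rw [Matrix.mul_apply]
  simp only [SM, TM, adjMatrix_apply, ite_mul, one_mul, zero_mul, ← ite_and]
  by_cases h : G.Adj u v
  · rw [if_pos h]
    apply sum_ite_unique _ (⟨(u, v), h⟩ : G.Dart)
    intro d
    constructor
    · rintro ⟨h1, h2⟩
      exact SimpleGraph.Dart.ext _ _ (Prod.ext h1 h2)
    · rintro rfl
      exact ⟨rfl, rfl⟩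
  · rw [if_neg h]
    apply sum_ite_zero'
    rintro d ⟨h1, h2⟩
    exact h (h1 ▸ h2 ▸ d.adj)

lemma SST {k : ℕ} (hreg : G.IsRegularOfDegree k) :
    SM G * (SM G)ᵀ = (k : ℝ) • (1 : Matrix V V ℝ) := by
  ext u v
  rw [Matrix.mul_apply]
  simp only [SM, Matrix.transpose_apply, ite_mul, one_mul, zero_mul, Matrix.smul_apply,
    Matrix.one_apply, smul_eq_mul, ← ite_and]
  by_cases h : u = v
  · subst h
    rw [if_pos rfl, mul_one]
    have : ∀ d : G.Dart, (d.fst = u ∧ d.fst = u) ↔ d.fst = u := fun d => and_self_iff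
    rw [Finset.sum_congr rfl fun d _ => if_congr (this d) rfl rfl, Finset.sum_boole]
    have hfib := G.dart_fst_fiber_card_eq_degree u
    rw [show ({d : G.Dart | d.fst = u} : Finset _) = Finset.univ.filter (fun d => d.fst = u)
      from rfl] at hfib
    rw [hfib, hreg u]
  · rw [if_neg h, mul_zero]
    apply sum_ite_zero'
    rintro d ⟨h1, h2⟩
    exact h (h1 ▸ h2)

lemma BT : BM G * TM G = TM G * G.adjMatrix ℝ - (SM G)ᵀ := by
  ext d v
  rw [Matrix.sub_apply, Matrix.mul_apply, Matrix.mul_apply]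
  have hrhs : ∑ w, TM G d w * G.adjMatrix ℝ w v = if G.Adj d.snd v then 1 else 0 := by
    simp only [TM, ite_mul, one_mul, zero_mul]
    rw [Finset.sum_eq_single d.snd]
    · simp
    · intro w _ hw; rw [if_neg (fun h => hw h.symm)]
    · simp
  rw [hrhs]
  simp only [BM, TM, Matrix.transpose_apply, SM, ite_mul, one_mul, zero_mul, ← ite_and]
  have hlhs : (∑ f : G.Dart, if (f.fst = d.snd ∧ f.snd ≠ d.fst) ∧ f.snd = v then (1:ℝ) else 0)
      = if G.Adj d.snd v ∧ v ≠ d.fst then 1 else 0 := by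
    by_cases h : G.Adj d.snd v ∧ v ≠ d.fst
    · rw [if_pos h]
      apply sum_ite_unique _ (⟨(d.snd, v), h.1⟩ : G.Dart)
      intro f
      constructor
      · rintro ⟨⟨h1, _⟩, h2⟩
        exact SimpleGraph.Dart.ext _ _ (Prod.ext h1 h2)
      · rintro rfl
        exact ⟨⟨rfl, h.2⟩, rfl⟩
    · rw [if_neg h]
      apply sum_ite_zero'
      rintro f ⟨⟨h1, h2⟩, h3⟩
      exact h ⟨h1 ▸ h3 ▸ f.adj, h3 ▸ h2⟩
  rw [hlhs]
  by_cases hv : d.fst = v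
  · subst hv
    rw [if_neg (by simp), if_pos d.adj.symm, if_pos rfl]
    norm_num
  · rw [if_neg hv]
    by_cases ha : G.Adj d.snd v
    · rw [if_pos ⟨ha, fun h => hv h.symm⟩, if_pos ha]; norm_num
    · rw [if_neg (fun h => ha h.1), if_neg ha]; norm_num

lemma BS {k : ℕ} (hk : 2 ≤ k) (hreg : G.IsRegularOfDegree k) :
    BM G * (SM G)ᵀ = ((k : ℝ) - 1) • TM G := by
  ext d v
  rw [Matrix.mul_apply, Matrix.smul_apply]
  simp only [BM, SM, TM, Matrix.transpose_apply, ite_mul, one_mul, zero_mul, smul_eq_mul,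
    ← ite_and]
  by_cases hv : d.snd = v
  · subst hv
    rw [if_pos rfl, mul_one]
    have heq : ∀ f : G.Dart, ((f.fst = d.snd ∧ f.snd ≠ d.fst) ∧ f.fst = d.snd)
        ↔ (f.fst = d.snd ∧ f.snd ≠ d.fst) := fun f => ⟨fun h => h.1, fun h => ⟨h, h.1⟩⟩
    rw [Finset.sum_congr rfl fun f _ => if_congr (heq f) rfl rfl, Finset.sum_boole]
    have hset : Finset.univ.filter (fun f : G.Dart => f.fst = d.snd ∧ f.snd ≠ d.fst)
        = (Finset.univ.filter (fun f : G.Dart => f.fst = d.snd)).erase d.symm := by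
      ext f
      simp only [Finset.mem_filter, Finset.mem_univ, true_and, Finset.mem_erase]
      constructor
      · rintro ⟨h1, h2⟩
        refine ⟨?_, h1⟩
        intro hf
        apply h2
        rw [hf]
        rfl
      · rintro ⟨h1, h2⟩
        refine ⟨h2, ?_⟩
        intro hf
        apply h1
        apply SimpleGraph.Dart.ext
        have : d.symm.toProd = (d.snd, d.fst) := rfl
        rw [this, Prod.ext_iff]
        exact ⟨h2, hf⟩
    rw [hset]
    have hmem : d.symm ∈ Finset.univ.filter (fun f : G.Dart => f.fst = d.snd) := by
      simp only [Finset.mem_filter, Finset.mem_univ, true_and]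
      rfl
    rw [Finset.card_erase_of_mem hmem]
    have hcard : (Finset.univ.filter (fun f : G.Dart => f.fst = d.snd)).card = k := by
      have := G.dart_fst_fiber_card_eq_degree d.snd
      rw [show ({f : G.Dart | f.fst = d.snd} : Finset _)
        = Finset.univ.filter (fun f : G.Dart => f.fst = d.snd) from rfl] at this
      rw [this, hreg d.snd]
    rw [hcard]
    have h1k : (1:ℕ) ≤ k := le_trans (by norm_num) hk
    push_cast [h1k]
    ring
  · rw [if_neg hv, mul_zero]
    apply sum_ite_zero'
    rintro f ⟨⟨h1, _⟩, h2⟩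
    exact hv (h1 ▸ h2)

/-- The matrix of non-backtracking walk counts. -/
noncomputable def MM : ℕ → Matrix V V ℝ
  | 0 => 1
  | (n + 1) => SM G * ((BM G) ^ n * TM G)

lemma aeval_comm (A : Matrix V V ℝ) (p : ℝ[X]) :
    A * Polynomial.aeval A p = Polynomial.aeval A p * A := by
  have h1 : A * Polynomial.aeval A p = Polynomial.aeval A (X * p) := by
    rw [_root_.map_mul, aeval_X]
  have h2 : Polynomial.aeval A p * A = Polynomial.aeval A (p * X) := by
    rw [_root_.map_mul, aeval_X]
  rw [h1, h2, mul_comm]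

lemma key {k : ℕ} (hk : 2 ≤ k) (hreg : G.IsRegularOfDegree k) :
    ∀ i, Polynomial.aeval (G.adjMatrix ℝ) (treeF (k : ℝ) i) = MM G i
  | 0 => by simp [treeF, MM]
  | 1 => by
      show Polynomial.aeval (G.adjMatrix ℝ) X = SM G * ((BM G) ^ 0 * TM G)
      rw [aeval_X, pow_zero, Matrix.one_mul, ST]
  | 2 => by
      show Polynomial.aeval (G.adjMatrix ℝ) (X ^ 2 - C (k:ℝ))
        = SM G * ((BM G) ^ 1 * TM G)
      rw [_root_.map_sub, _root_.map_pow, aeval_X, aeval_C, pow_one, BT, Matrix.mul_sub,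
        ← Matrix.mul_assoc, ST, ← sq, SST G hreg, Algebra.algebraMap_eq_smul_one]
  | (n + 3) => by
      have h2 := key hk hreg (n + 2)
      have h1 := key hk hreg (n + 1)
      show Polynomial.aeval (G.adjMatrix ℝ)
          (X * treeF (k:ℝ) (n + 2) - C ((k:ℝ) - 1) * treeF (k:ℝ) (n + 1)) = _
      rw [_root_.map_sub, _root_.map_mul, _root_.map_mul, aeval_X, aeval_C, h2, h1]
      have hmm3 : MM G (n + 3)
          = MM G (n + 2) * G.adjMatrix ℝ - ((k:ℝ) - 1) • MM G (n + 1) := by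
        show SM G * ((BM G) ^ (n + 2) * TM G) = _
        rw [pow_succ, Matrix.mul_assoc, BT, Matrix.mul_sub, Matrix.mul_sub]
        congr 1
        · show SM G * ((BM G) ^ (n + 1) * (TM G * G.adjMatrix ℝ)) = _
          show _ = SM G * ((BM G) ^ (n + 1) * TM G) * G.adjMatrix ℝ
          rw [Matrix.mul_assoc, Matrix.mul_assoc]
        · show SM G * ((BM G) ^ (n + 1) * (SM G)ᵀ) = _
          rw [pow_succ, Matrix.mul_assoc, BS G hk hreg, Matrix.mul_smul, Matrix.mul_smul]
          rfl
      rw [hmm3]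
      have hcomm : MM G (n + 2) * G.adjMatrix ℝ = G.adjMatrix ℝ * MM G (n + 2) := by
        rw [← h2, ← aeval_comm]
      rw [hcomm]
      congr 1
      rw [Algebra.algebraMap_eq_smul_one, smul_mul_assoc, one_mul]

lemma mul_nonneg_entries {α β γ : Type} [Fintype α] [Fintype β] [Fintype γ]
    (M : Matrix α β ℝ) (N : Matrix β γ ℝ)
    (hM : ∀ i j, 0 ≤ M i j) (hN : ∀ i j, 0 ≤ N i j) :
    ∀ i j, 0 ≤ (M * N) i j := by
  intro i j
  rw [Matrix.mul_apply]
  exact Finset.sum_nonneg fun b _ => mul_nonneg (hM i b) (hN b j)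

lemma pow_nonneg_entries {α : Type} [Fintype α] [DecidableEq α]
    (M : Matrix α α ℝ) (hM : ∀ i j, 0 ≤ M i j) :
    ∀ n, ∀ i j, 0 ≤ (M ^ n) i j := by
  intro n
  induction n with
  | zero =>
      intro i j
      simp only [pow_zero, Matrix.one_apply]
      split <;> norm_num
  | succ m ih =>
      rw [pow_succ]
      exact mul_nonneg_entries _ _ ih hM

lemma MM_nonneg (i : ℕ) : ∀ u v, 0 ≤ MM G i u v := by
  match i with
  | 0 =>
      intro u v
      show 0 ≤ (1 : Matrix V V ℝ) u v
      simp only [Matrix.one_apply]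
      split <;> norm_num
  | (n + 1) =>
      show ∀ u v, 0 ≤ (SM G * ((BM G) ^ n * TM G)) u v
      exact mul_nonneg_entries _ _ (SM_nonneg G)
        (mul_nonneg_entries _ _ (pow_nonneg_entries _ (BM_nonneg G) n) (TM_nonneg G))

end TreeFAux

theorem treeF_trace_nonneg (V : Type) [Fintype V] [DecidableEq V]
    (G : SimpleGraph V) [DecidableRel G.Adj] (k : ℕ) (hk : 2 ≤ k)
    (hreg : G.IsRegularOfDegree k) (hconn : G.Connected) (i : ℕ) :
    0 ≤ Matrix.trace (Polynomial.aeval (G.adjMatrix ℝ) (treeF (k : ℝ) i)) := by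
  rw [TreeFAux.key G hk hreg i, Matrix.trace]
  exact Finset.sum_nonneg fun v _ => TreeFAux.MM_nonneg G i v v
end

section
/- Let G be a connected k-regular simple graph with adjacency matrix A and girth g. Then tr(F_i^{(k)}(A))=0 for each 1≤i≤g-1 and tr(F_g^{(k)}(A))≠0. Conversely, if tr(F_i^{(k)}(A))=0 for 1≤i≤g-1 and tr(F_g^{(k)}(A))≠0, then G has girth g. -/
open Polynomial

set_option linter.unusedSectionVars false
set_option maxHeartbeats 1000000
namespace TreeFProof
open SimpleGraph Finset

variable {V : Type} [Fintype V] [DecidableEq V] {G : SimpleGraph V} [DecidableRel G.Adj]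

def nbt : {u v : V} → G.Walk u v → Bool
  | _, _, .nil => true
  | _, _, .cons _ .nil => true
  | u, _, .cons _ (.cons (v := b) h₂ q) => decide (b ≠ u) && nbt (.cons h₂ q)

@[simp] lemma nbt_nil {u : V} : nbt (.nil : G.Walk u u) = true := rfl
@[simp] lemma nbt_cons_nil {u v : V} (h : G.Adj u v) : nbt (Walk.cons h .nil) = true := rfl
lemma nbt_cons_cons {u a b v : V} (h₁ : G.Adj u a) (h₂ : G.Adj a b) (q : G.Walk b v) :
    nbt (Walk.cons h₁ (Walk.cons h₂ q)) = (decide (b ≠ u) && nbt (Walk.cons h₂ q)) := rfl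

lemma nbt_of_cons {u w v : V} {h : G.Adj u w} {q : G.Walk w v} (hn : nbt (Walk.cons h q) = true) :
    nbt q = true := by
  cases q with
  | nil => rfl
  | cons h₂ r => rw [nbt_cons_cons, Bool.and_eq_true] at hn; exact hn.2

lemma nbt_cons_eq {u w v : V} (h : G.Adj u w) (p : G.Walk w v) (hp : p.length ≠ 0) :
    nbt (Walk.cons h p) = (decide (p.getVert 1 ≠ u) && nbt p) := by
  cases p with
  | nil => simp at hp
  | cons h₂ r => rw [nbt_cons_cons, Walk.getVert_cons_succ (n := 0), Walk.getVert_zero]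

variable (G) in
def N (n : ℕ) (u v : V) : ℕ :=
  ((G.finsetWalkLength n u v).filter (fun p => nbt p = true)).card

lemma card_filter_succ (n : ℕ) (u v : V) (Q : G.Walk u v → Bool) :
    ((G.finsetWalkLength (n+1) u v).filter (fun p => Q p = true)).card
      = ∑ w : G.neighborSet u,
          ((G.finsetWalkLength n w v).filter (fun p => Q (Walk.cons w.2 p) = true)).card := by
  have hdef : G.finsetWalkLength (n+1) u v
      = Finset.univ.biUnion fun (w : G.neighborSet u) =>
        (G.finsetWalkLength n w v).map ⟨fun p => Walk.cons w.property p, fun _ _ h => by cases h; rfl⟩ := rfl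
  rw [hdef, Finset.filter_biUnion, Finset.card_biUnion]
  · refine Finset.sum_congr rfl fun w _ => ?_
    rw [Finset.filter_map, Finset.card_map]
    rfl
  · intro w _ w' _ hne
    simp only [Finset.disjoint_left, Finset.mem_filter, Finset.mem_map,
      Function.Embedding.coeFn_mk]
    rintro p ⟨⟨q, hq, rfl⟩, -⟩ ⟨⟨q', hq', heq⟩, -⟩
    apply hne
    have h1 := (Walk.getVert_cons_succ (n := 0) q w.2).trans q.getVert_zero
    have h2 := (Walk.getVert_cons_succ (n := 0) q' w'.2).trans q'.getVert_zero
    rw [show Walk.cons w'.2 q' = Walk.cons w.2 q from heq] at h2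
    exact Subtype.ext (h1.symm.trans h2)

lemma N_zero (u v : V) : N G 0 u v = if u = v then 1 else 0 := by
  rcases eq_or_ne u v with rfl | hne
  · rw [if_pos rfl]
    have h : (G.finsetWalkLength 0 u u).filter (fun p => nbt p = true) = {Walk.nil} := by
      ext p
      simp only [Finset.mem_filter, SimpleGraph.mem_finsetWalkLength_iff, Finset.mem_singleton]
      constructor
      · rintro ⟨hl, -⟩; exact Walk.nil_iff_eq_nil.mp (Walk.length_eq_zero_iff.mp hl)
      · rintro rfl; exact ⟨rfl, rfl⟩
    rw [N, h, Finset.card_singleton]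
  · rw [if_neg hne, N, Finset.card_eq_zero, Finset.eq_empty_iff_forall_notMem]
    intro p hp
    rw [Finset.mem_filter, SimpleGraph.mem_finsetWalkLength_iff] at hp
    exact hne (Walk.eq_of_length_eq_zero hp.1)

lemma N_one (u v : V) : N G 1 u v = if G.Adj u v then 1 else 0 := by
  rw [N, card_filter_succ]
  have hterm : ∀ (x : V) (hx : G.Adj u x),
      ((G.finsetWalkLength 0 x v).filter (fun p => nbt (Walk.cons hx p) = true)).card
        = if x = v then 1 else 0 := by
    intro x hx
    rcases eq_or_ne x v with rfl | hxv
    · rw [if_pos rfl]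
      have h : (G.finsetWalkLength 0 x x).filter (fun p => nbt (Walk.cons hx p) = true)
          = {Walk.nil} := by
        ext p
        simp only [Finset.mem_filter, SimpleGraph.mem_finsetWalkLength_iff, Finset.mem_singleton]
        constructor
        · rintro ⟨hl, -⟩; exact Walk.nil_iff_eq_nil.mp (Walk.length_eq_zero_iff.mp hl)
        · rintro rfl; exact ⟨rfl, rfl⟩
      rw [h, Finset.card_singleton]
    · rw [if_neg hxv, Finset.card_eq_zero, Finset.eq_empty_iff_forall_notMem]
      intro p hp
      rw [Finset.mem_filter, SimpleGraph.mem_finsetWalkLength_iff] at hp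
      exact hxv (Walk.eq_of_length_eq_zero hp.1)
  calc (∑ w : G.neighborSet u,
        ((G.finsetWalkLength 0 (w : V) v).filter (fun p => nbt (Walk.cons w.2 p) = true)).card)
      = ∑ w : G.neighborSet u, if (w : V) = v then 1 else 0 :=
        Finset.sum_congr rfl fun w _ => hterm w.1 w.2
    _ = ∑ w ∈ G.neighborFinset u, if w = v then 1 else 0 := by
        rw [show G.neighborFinset u = (G.neighborSet u).toFinset from rfl]
        exact Finset.sum_set_coe (s := G.neighborSet u) (f := fun x => if x = v then 1 else 0)
    _ = if G.Adj u v then 1 else 0 := by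
        rw [Finset.sum_ite_eq' (G.neighborFinset u) v (fun _ => 1)]
        simp

lemma nbt_len2 {u v : V} (p : G.Walk u v) (hl : p.length = 2) : nbt p = true ↔ v ≠ u := by
  cases p with
  | nil => simp at hl
  | cons h q => cases q with
    | nil => simp at hl
    | cons h₂ r => cases r with
      | nil => rw [nbt_cons_cons]; simp
      | cons h₃ s => simp [Walk.length_cons] at hl

lemma N_two_diag (u : V) : N G 2 u u = 0 := by
  rw [N, Finset.card_eq_zero, Finset.eq_empty_iff_forall_notMem]
  intro p hp
  rw [Finset.mem_filter, SimpleGraph.mem_finsetWalkLength_iff] at hp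
  exact (nbt_len2 p hp.1).mp hp.2 rfl

lemma N_two_ne {u v : V} (h : u ≠ v) : N G 2 u v = (G.finsetWalkLength 2 u v).card := by
  rw [N, Finset.filter_true_of_mem]
  intro p hp
  rw [SimpleGraph.mem_finsetWalkLength_iff] at hp
  exact (nbt_len2 p hp).mpr h.symm

lemma keyN (k : ℕ) (hreg : G.IsRegularOfDegree k) (n : ℕ) (u v : V) :
    N G (n+3) u v + k * N G (n+1) u v
      = (∑ w ∈ G.neighborFinset u, N G (n+2) w v) + N G (n+1) u v := by
  classical
  have h1 : N G (n+3) u v = ∑ w ∈ G.neighborFinset u,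
      ((G.finsetWalkLength (n+2) w v).filter
        (fun p => nbt p = true ∧ ¬ p.getVert 1 = u)).card := by
    rw [N, card_filter_succ]
    have hterm : ∀ (x : V) (hx : G.Adj u x),
        ((G.finsetWalkLength (n+2) x v).filter (fun p => nbt (Walk.cons hx p) = true)).card
          = ((G.finsetWalkLength (n+2) x v).filter
              (fun p => nbt p = true ∧ ¬ p.getVert 1 = u)).card := by
      intro x hx
      congr 1
      apply Finset.filter_congr
      intro p hp
      rw [SimpleGraph.mem_finsetWalkLength_iff] at hp
      rw [nbt_cons_eq hx p (by omega)]
      simp [Bool.and_eq_true, and_comm]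
    calc (∑ w : G.neighborSet u,
          ((G.finsetWalkLength (n+2) (w : V) v).filter
            (fun p => nbt (Walk.cons w.2 p) = true)).card)
        = ∑ w : G.neighborSet u,
            ((G.finsetWalkLength (n+2) (w : V) v).filter
              (fun p => nbt p = true ∧ ¬ p.getVert 1 = u)).card :=
          Finset.sum_congr rfl fun w _ => hterm w.1 w.2
      _ = _ := by
        rw [show G.neighborFinset u = (G.neighborSet u).toFinset from rfl]
        exact Finset.sum_set_coe (s := G.neighborSet u)
          (f := fun x => ((G.finsetWalkLength (n+2) x v).filter
            (fun p => nbt p = true ∧ ¬ p.getVert 1 = u)).card)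
  have h2 : ∀ w : V,
      ((G.finsetWalkLength (n+2) w v).filter
        (fun p => nbt p = true ∧ p.getVert 1 = u)).card
      + ((G.finsetWalkLength (n+2) w v).filter
        (fun p => nbt p = true ∧ ¬ p.getVert 1 = u)).card = N G (n+2) w v := by
    intro w
    rw [N]
    have := Finset.card_filter_add_card_filter_not
      (s := (G.finsetWalkLength (n+2) w v).filter (fun p => nbt p = true))
      (p := fun p => p.getVert 1 = u)
    simpa only [Finset.filter_filter] using this
  have h4 : ∀ w : V,
      ((G.finsetWalkLength (n+1) u v).filter
        (fun p => nbt p = true ∧ p.getVert 1 = w)).card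
      + ((G.finsetWalkLength (n+1) u v).filter
        (fun p => nbt p = true ∧ ¬ p.getVert 1 = w)).card = N G (n+1) u v := by
    intro w
    rw [N]
    have := Finset.card_filter_add_card_filter_not
      (s := (G.finsetWalkLength (n+1) u v).filter (fun p => nbt p = true))
      (p := fun p => p.getVert 1 = w)
    simpa only [Finset.filter_filter] using this
  have h5 : ∑ w ∈ G.neighborFinset u,
      ((G.finsetWalkLength (n+1) u v).filter
        (fun p => nbt p = true ∧ p.getVert 1 = w)).card = N G (n+1) u v := by
    rw [N]
    have H : ∀ p ∈ (G.finsetWalkLength (n+1) u v).filter (fun p => nbt p = true),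
        p.getVert 1 ∈ G.neighborFinset u := by
      intro p hp
      rw [Finset.mem_filter, SimpleGraph.mem_finsetWalkLength_iff] at hp
      rw [SimpleGraph.mem_neighborFinset]
      have hadj := Walk.adj_getVert_succ p (i := 0) (by omega)
      rwa [Walk.getVert_zero] at hadj
    have := Finset.card_eq_sum_card_fiberwise H
    simp only [Finset.filter_filter] at this
    exact this.symm
  have h3 : ∀ w ∈ G.neighborFinset u,
      ((G.finsetWalkLength (n+2) w v).filter
        (fun p => nbt p = true ∧ p.getVert 1 = u)).card
      = ((G.finsetWalkLength (n+1) u v).filter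
        (fun p => nbt p = true ∧ ¬ p.getVert 1 = w)).card := by
    intro w hw
    rw [SimpleGraph.mem_neighborFinset] at hw
    refine (Finset.card_bij (fun (p : G.Walk u v) _ => Walk.cons hw.symm p) ?_ ?_ ?_).symm
    · intro p hp
      simp only [Finset.mem_filter, SimpleGraph.mem_finsetWalkLength_iff] at hp ⊢
      obtain ⟨hlen, hnbt, hgv⟩ := hp
      refine ⟨by simp [hlen], ?_, ?_⟩
      · rw [nbt_cons_eq hw.symm p (by omega)]
        simp [hnbt, hgv]
      · exact (Walk.getVert_cons_succ (n := 0) p hw.symm).trans p.getVert_zero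
    · intro p hp q hq hpq
      simpa using hpq
    · intro p hp
      simp only [Finset.mem_filter, SimpleGraph.mem_finsetWalkLength_iff] at hp
      obtain ⟨hlen, hnbt, hgv⟩ := hp
      cases p with
      | nil => simp at hlen
      | cons h₂ q =>
        rw [Walk.getVert_cons_succ (n := 0), Walk.getVert_zero] at hgv
        subst hgv
        have hqlen : q.length = n + 1 := by
          rw [Walk.length_cons] at hlen; omega
        refine ⟨q, ?_, rfl⟩
        simp only [Finset.mem_filter, SimpleGraph.mem_finsetWalkLength_iff]
        have hq2 : nbt q = true := nbt_of_cons hnbt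
        refine ⟨hqlen, hq2, ?_⟩
        rw [nbt_cons_eq h₂ q (by omega)] at hnbt
        rw [Bool.and_eq_true, decide_eq_true_iff] at hnbt
        exact hnbt.1
  have h6 : (G.neighborFinset u).card = k := hreg u
  have e1 : ∑ w ∈ G.neighborFinset u, N G (n+2) w v
      = (∑ w ∈ G.neighborFinset u,
          ((G.finsetWalkLength (n+2) w v).filter
            (fun p => nbt p = true ∧ ¬ p.getVert 1 = u)).card)
        + ∑ w ∈ G.neighborFinset u,
          ((G.finsetWalkLength (n+2) w v).filter
            (fun p => nbt p = true ∧ p.getVert 1 = u)).card := by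
    rw [← Finset.sum_add_distrib]
    exact Finset.sum_congr rfl fun w _ => by rw [← h2 w]; omega
  have e2 : ∑ w ∈ G.neighborFinset u,
      ((G.finsetWalkLength (n+2) w v).filter
        (fun p => nbt p = true ∧ p.getVert 1 = u)).card
      = ∑ w ∈ G.neighborFinset u,
        ((G.finsetWalkLength (n+1) u v).filter
          (fun p => nbt p = true ∧ ¬ p.getVert 1 = w)).card :=
    Finset.sum_congr rfl h3
  have e3 : (∑ w ∈ G.neighborFinset u,
      ((G.finsetWalkLength (n+1) u v).filter
        (fun p => nbt p = true ∧ p.getVert 1 = w)).card)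
      + ∑ w ∈ G.neighborFinset u,
        ((G.finsetWalkLength (n+1) u v).filter
          (fun p => nbt p = true ∧ ¬ p.getVert 1 = w)).card
      = k * N G (n+1) u v := by
    rw [← Finset.sum_add_distrib]
    calc ∑ w ∈ G.neighborFinset u,
          (((G.finsetWalkLength (n+1) u v).filter
            (fun p => nbt p = true ∧ p.getVert 1 = w)).card
          + ((G.finsetWalkLength (n+1) u v).filter
            (fun p => nbt p = true ∧ ¬ p.getVert 1 = w)).card)
        = ∑ _w ∈ G.neighborFinset u, N G (n+1) u v :=
          Finset.sum_congr rfl fun w _ => h4 w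
      _ = k * N G (n+1) u v := by rw [Finset.sum_const, h6, smul_eq_mul]
  rw [h1, e1, e2]
  omega
lemma girth_le_of_cycle {a : V} {c : G.Walk a a} (hc : c.IsCycle) : G.girth ≤ c.length := by
  have h1 : G.egirth ≤ (c.length : ℕ∞) := by
    calc G.egirth ≤ ⨅ w : G.Walk a a, ⨅ _ : w.IsCycle, (w.length : ℕ∞) := iInf_le _ a
      _ ≤ ⨅ _ : c.IsCycle, (c.length : ℕ∞) := iInf_le _ c
      _ ≤ (c.length : ℕ∞) := iInf_le _ hc
  have h2 := ENat.toNat_le_toNat h1 (by simp)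
  simpa [SimpleGraph.girth] using h2

lemma length_one_walk {w u : V} (p : G.Walk w u) (h1 : p.length = 1) :
    ∃ (h : G.Adj w u), p = Walk.cons h Walk.nil := by
  cases p with
  | nil => simp at h1
  | cons h q =>
    cases q with
    | nil => exact ⟨h, rfl⟩
    | cons h₂ r => simp [Walk.length_cons] at h1

lemma edge_end_length_one : ∀ {w u : V} (p : G.Walk w u), p.IsPath → u ≠ w →
    s(u, w) ∈ p.edges → p.length = 1 := by
  intro w u p
  induction p with
  | nil => intro _ _ he; simp at he
  | @cons w x u h₁ r ih =>
    intro hp hne he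
    rw [Walk.edges_cons, List.mem_cons] at he
    rcases he with he | he
    · rw [Sym2.eq_iff] at he
      rcases he with ⟨hh1, hh2⟩ | ⟨hh1, hh2⟩
      · exact absurd hh1 hne
      · subst hh1
        have hr : r = Walk.nil := Walk.isPath_iff_eq_nil.mp hp.of_cons
        rw [hr]
        simp
    · exfalso
      have hw : w ∈ r.support := Walk.snd_mem_support_of_mem_edges r he
      rw [Walk.cons_isPath_iff] at hp
      exact hp.2 hw

lemma isPath_of_nbt : ∀ {u v : V} (p : G.Walk u v), nbt p = true → p.length < G.girth →
    p.IsPath := by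
  intro u v p
  induction p with
  | nil => intro _ _; exact Walk.IsPath.nil
  | @cons u w v h q ih =>
    intro hn hlen
    rw [Walk.length_cons] at hlen
    have hq : q.IsPath := ih (nbt_of_cons hn) (by omega)
    rw [Walk.cons_isPath_iff]
    refine ⟨hq, fun hu => ?_⟩
    have hq' : (q.takeUntil u hu).IsPath := hq.takeUntil hu
    have hlen' := Walk.length_takeUntil_le q hu
    by_cases he : s(u, w) ∈ (q.takeUntil u hu).edges
    · have h1 : (q.takeUntil u hu).length = 1 :=
        edge_end_length_one (q.takeUntil u hu) hq' h.ne he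
      obtain ⟨hwu, hq1⟩ := length_one_walk _ h1
      have hspec := q.take_spec hu
      rw [hq1] at hspec
      rw [Walk.cons_append, Walk.nil_append] at hspec
      rw [← hspec, nbt_cons_cons] at hn
      simp at hn
    · have hcyc : (Walk.cons h (q.takeUntil u hu)).IsCycle :=
        (Walk.cons_isCycle_iff _ h).mpr ⟨hq', he⟩
      have hgl := girth_le_of_cycle hcyc
      rw [Walk.length_cons] at hgl
      omega

lemma nbt_of_isTrail : ∀ {u v : V} (p : G.Walk u v), p.IsTrail → nbt p = true := by
  intro u v p
  induction p with
  | nil => intro _; rfl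
  | @cons u w v h q ih =>
    intro ht
    cases q with
    | nil => rfl
    | @cons w b v' h₂ r =>
      rw [nbt_cons_cons, Bool.and_eq_true]
      refine ⟨?_, ih ht.of_cons⟩
      rw [decide_eq_true_iff]
      intro hb
      subst hb
      have hnd := ht.edges_nodup
      rw [Walk.edges_cons, Walk.edges_cons] at hnd
      rw [List.nodup_cons] at hnd
      exact hnd.1 (List.mem_cons.mpr (Or.inl Sym2.eq_swap))

lemma N_diag_zero {i : ℕ} (h1 : 1 ≤ i) (h2 : i < G.girth) (u : V) : N G i u u = 0 := by
  rw [N, Finset.card_eq_zero, Finset.eq_empty_iff_forall_notMem]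
  intro p hp
  rw [Finset.mem_filter, SimpleGraph.mem_finsetWalkLength_iff] at hp
  have hpath := isPath_of_nbt p hp.2 (by rw [hp.1]; exact h2)
  have hnil := Walk.isPath_iff_eq_nil.mp hpath
  rw [hnil] at hp
  simp at hp
  omega

lemma N_girth_pos (hnc : ¬ G.IsAcyclic) : ∃ a : V, 0 < N G G.girth a a := by
  obtain ⟨a, c, hcyc, hlen⟩ := (SimpleGraph.exists_girth_eq_length (G := G)).mpr hnc
  refine ⟨a, Finset.card_pos.mpr ⟨c, ?_⟩⟩
  rw [Finset.mem_filter, SimpleGraph.mem_finsetWalkLength_iff]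
  exact ⟨hlen.symm, nbt_of_isTrail c hcyc.isCircuit.isTrail⟩


lemma main_mat (k : ℕ) (hreg : G.IsRegularOfDegree k) :
    ∀ n, (Polynomial.aeval (G.adjMatrix ℝ)) (treeF (k : ℝ) n)
      = Matrix.of (fun u v => (N G n u v : ℝ))
  | 0 => by
      simp only [treeF, map_one]
      ext u v
      rw [Matrix.one_apply, Matrix.of_apply, N_zero]
      split <;> simp
  | 1 => by
      simp only [treeF, aeval_X]
      ext u v
      rw [Matrix.of_apply, N_one, SimpleGraph.adjMatrix_apply]
      split <;> simp
  | 2 => by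
      simp only [treeF, map_sub, map_pow, aeval_X, aeval_C]
      ext u v
      rw [Matrix.sub_apply, Matrix.of_apply]
      rcases eq_or_ne u v with rfl | hne
      · rw [N_two_diag, pow_two, SimpleGraph.adjMatrix_mul_self_apply_self,
          Algebra.algebraMap_eq_smul_one, Matrix.smul_apply, Matrix.one_apply_eq,
          smul_eq_mul, mul_one, hreg u]
        simp
      · rw [N_two_ne hne, SimpleGraph.adjMatrix_pow_apply_eq_card_walk,
          SimpleGraph.card_set_walk_length_eq, Algebra.algebraMap_eq_smul_one,
          Matrix.smul_apply, Matrix.one_apply_ne hne, smul_eq_mul, mul_zero, sub_zero]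
  | (n+3) => by
      have ih1 := main_mat k hreg (n+1)
      have ih2 := main_mat k hreg (n+2)
      simp only [treeF, map_sub, map_mul, aeval_X, aeval_C, ih1, ih2]
      ext u v
      rw [Matrix.sub_apply, Matrix.of_apply, SimpleGraph.adjMatrix_mul_apply,
        Matrix.sub_mul, Matrix.sub_apply, ← Algebra.smul_def, ← Algebra.smul_def,
        Matrix.smul_apply, Matrix.smul_apply, smul_eq_mul, smul_eq_mul, one_mul]
      simp only [Matrix.of_apply]
      have hkey := keyN k hreg n u v
      have hcast : ((N G (n+3) u v : ℝ)) + (k : ℝ) * (N G (n+1) u v : ℝ)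
          = (∑ w ∈ G.neighborFinset u, (N G (n+2) w v : ℝ)) + (N G (n+1) u v : ℝ) := by
        exact_mod_cast congrArg (fun m : ℕ => (m : ℝ)) hkey
      push_cast
      push_cast at hcast
      linarith

lemma not_acyclic (k : ℕ) (hk : 2 ≤ k) (hreg : G.IsRegularOfDegree k)
    (hconn : G.Connected) : ¬ G.IsAcyclic := by
  intro hacyc
  have htree : G.IsTree := ⟨hconn, hacyc⟩
  have hcard := htree.card_edgeFinset
  have hsum := G.sum_degrees_eq_twice_card_edges
  have hdeg : ∑ v : V, G.degree v = k * Fintype.card V := by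
    rw [Finset.sum_congr rfl (fun v _ => hreg v), Finset.sum_const, Finset.card_univ,
      smul_eq_mul, mul_comm]
  rw [hdeg] at hsum
  have hV : 1 ≤ Fintype.card V := Fintype.card_pos_iff.mpr hconn.nonempty
  have h2 : 2 * Fintype.card V ≤ k * Fintype.card V :=
    Nat.mul_le_mul_right _ hk
  generalize k * Fintype.card V = m at hsum h2
  omega

end TreeFProof

open TreeFProof in
theorem treeF_trace_girth (V : Type) [Fintype V] [DecidableEq V]
    (G : SimpleGraph V) [DecidableRel G.Adj] (k : ℕ) (hk : 2 ≤ k)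
    (hreg : G.IsRegularOfDegree k) (hconn : G.Connected) (g : ℕ) (hg : 3 ≤ g) :
    G.girth = (g : ℕ∞) ↔
      ((∀ i, 1 ≤ i → i ≤ g - 1 →
          Matrix.trace (Polynomial.aeval (G.adjMatrix ℝ) (treeF (k : ℝ) i)) = 0) ∧
        Matrix.trace (Polynomial.aeval (G.adjMatrix ℝ) (treeF (k : ℝ) g)) ≠ 0) := by
  have hnc : ¬ G.IsAcyclic := not_acyclic k hk hreg hconn
  have h3 : 3 ≤ G.girth := SimpleGraph.three_le_girth hnc
  have htr : ∀ n, Matrix.trace (Polynomial.aeval (G.adjMatrix ℝ) (treeF (k : ℝ) n))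
      = ∑ u : V, (N G n u u : ℝ) := by
    intro n
    rw [main_mat k hreg n]
    simp [Matrix.trace, Matrix.diag]
  have hzero : ∀ i, 1 ≤ i → i < G.girth →
      Matrix.trace (Polynomial.aeval (G.adjMatrix ℝ) (treeF (k : ℝ) i)) = 0 := by
    intro i hi1 hi2
    rw [htr i]
    apply Finset.sum_eq_zero
    intro u _
    rw [N_diag_zero hi1 hi2]
    simp
  have hnonzero :
      Matrix.trace (Polynomial.aeval (G.adjMatrix ℝ) (treeF (k : ℝ) G.girth)) ≠ 0 := by
    rw [htr]
    obtain ⟨a, ha⟩ := N_girth_pos hnc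
    have hpos : 0 < ∑ u : V, (N G G.girth u u : ℝ) := by
      refine Finset.sum_pos' (fun u _ => by positivity) ⟨a, Finset.mem_univ a, ?_⟩
      exact_mod_cast ha
    exact ne_of_gt hpos
  constructor
  · intro hgg
    have hg0 : G.girth = g := by exact_mod_cast hgg
    refine ⟨fun i hi1 hi2 => hzero i hi1 (by omega), ?_⟩
    rw [← hg0]
    exact hnonzero
  · rintro ⟨hz, hnz⟩
    have hgeq : G.girth = g := by
      by_contra hne
      rcases Nat.lt_or_ge G.girth g with hlt | hge
      · exact hnonzero (hz G.girth (by omega) (by omega))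
      · have hlt2 : g < G.girth := by omega
        exact hnz (hzero g (by omega) hlt2)
    exact_mod_cast hgeq
end

section
/- Linear programming bound: Let G be a connected k-regular simple graph with v vertices and distinct eigenvalues τ_0=k, τ_1, …, τ_d. Suppose f(x)=Σ_{i≥0} f_i·F_i^{(k)}(x) is a real polynomial with f(k)>0, f(τ_i)≤0 for all 1≤i≤d, f_0>0, and f_i≥0 for all i≥1. Then v ≤ f(k)/f_0. -/
open Polynomial

open Matrix Finset SimpleGraph

set_option linter.unusedSectionVars false

variable {V : Type} [Fintype V] [DecidableEq V] (G : SimpleGraph V) [DecidableRel G.Adj]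

noncomputable def cnt : ℕ → V → V → V → ℝ
  | 0, u, x, v => if x = v then (if G.Adj u v then 1 else 0) else 0
  | (n+1), u, x, v => if G.Adj u x then ∑ y ∈ (G.neighborFinset x).erase u, cnt n x y v else 0

lemma cnt_nonneg : ∀ n u x v, 0 ≤ cnt G n u x v
  | 0, u, x, v => by unfold cnt; split <;> [skip; rfl] <;> split <;> norm_num
  | (n+1), u, x, v => by
      unfold cnt; split
      · exact Finset.sum_nonneg fun y _ => cnt_nonneg n x y v
      · exact le_refl 0

lemma cnt_eq_zero : ∀ n u x v, ¬ G.Adj u x → cnt G n u x v = 0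
  | 0, u, x, v, h => by
      unfold cnt; split
      · next hxv => subst hxv; rw [if_neg h]
      · rfl
  | (n+1), u, x, v, h => by unfold cnt; rw [if_neg h]

/-- non-backtracking walk count matrices -/
noncomputable def NB : ℕ → Matrix V V ℝ
  | 0 => 1
  | (n+1) => Matrix.of fun u v => ∑ x, cnt G n u x v

lemma NB_succ_apply (n : ℕ) (u v : V) : NB G (n+1) u v = ∑ x ∈ G.neighborFinset u, cnt G n u x v := by
  show (∑ x, cnt G n u x v) = _
  refine (Finset.sum_subset (Finset.subset_univ _) fun x _ hx => ?_).symm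
  exact cnt_eq_zero G n u x v (by simpa using hx)

lemma NB_one : NB G 1 = G.adjMatrix ℝ := by
  ext u v
  rw [NB_succ_apply]
  show (∑ x ∈ G.neighborFinset u, if x = v then (if G.Adj u v then 1 else 0) else 0) = _
  rw [Finset.sum_ite_eq' (G.neighborFinset u) v fun _ => (if G.Adj u v then (1:ℝ) else 0)]
  split
  · next h => simp [(G.mem_neighborFinset _ _).mp h]
  · next h => rw [adjMatrix_apply, if_neg (fun hh => h ((G.mem_neighborFinset _ _).mpr hh))]

lemma NB_two {k : ℕ} (hreg : G.IsRegularOfDegree k) :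
    NB G 2 = G.adjMatrix ℝ ^ 2 - (k : ℝ) • 1 := by
  ext u v
  rw [show (2:ℕ) = 1 + 1 from rfl, NB_succ_apply]
  have step : ∀ x, cnt G 1 u x v = if G.Adj u x then (if v ∈ (G.neighborFinset x).erase u then 1 else 0) else 0 := by
    intro x
    show (if G.Adj u x then ∑ y ∈ (G.neighborFinset x).erase u, cnt G 0 x y v else 0) = _
    congr 1
    show (∑ y ∈ (G.neighborFinset x).erase u, if y = v then (if G.Adj x v then 1 else 0) else 0) = _
    rw [Finset.sum_ite_eq' ((G.neighborFinset x).erase u) v fun _ => (if G.Adj x v then (1:ℝ) else 0)]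
    split
    · next h => rw [if_pos]; simp only [Finset.mem_erase, SimpleGraph.mem_neighborFinset] at h ⊢; exact h.2
    · rfl
  rw [Finset.sum_congr rfl fun x hx => by rw [step x, if_pos ((G.mem_neighborFinset _ _).mp hx)]]
  have hsq : (G.adjMatrix ℝ ^ 2) u v = ∑ x ∈ G.neighborFinset u, G.adjMatrix ℝ x v := by
    rw [sq, adjMatrix_mul_apply]
  by_cases huv : v = u
  · have h1 : ∀ x ∈ G.neighborFinset u, (if v ∈ (G.neighborFinset x).erase u then (1:ℝ) else 0) = 0 := by
      intro x _; rw [if_neg]; simp [huv]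
    rw [Finset.sum_congr rfl h1, Finset.sum_const, smul_zero]
    have h2 : (G.adjMatrix ℝ ^ 2) u v = k := by
      rw [hsq]
      rw [Finset.sum_congr rfl (fun x hx => by
        rw [adjMatrix_apply, if_pos (huv ▸ ((G.mem_neighborFinset _ _).mp hx).symm)])]
      rw [Finset.sum_const, show #(G.neighborFinset u) = k from hreg u, nsmul_eq_mul, mul_one]
    rw [Matrix.sub_apply, h2, Matrix.smul_apply, huv, Matrix.one_apply_eq, smul_eq_mul, mul_one, sub_self]
  · have h1 : ∀ x ∈ G.neighborFinset u, (if v ∈ (G.neighborFinset x).erase u then (1:ℝ) else 0) = G.adjMatrix ℝ x v := by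
      intro x _
      rw [adjMatrix_apply]
      by_cases h : G.Adj x v
      · rw [if_pos (by simp [SimpleGraph.mem_neighborFinset, h, huv]), if_pos h]
      · rw [if_neg (by simp [SimpleGraph.mem_neighborFinset, h]), if_neg h]
    rw [Finset.sum_congr rfl h1, ← hsq]
    have : ((k:ℝ) • (1 : Matrix V V ℝ)) u v = 0 := by
      simp [Matrix.one_apply, Ne.symm huv]
    simp [Matrix.sub_apply, this]

lemma NB_rec {k : ℕ} (hreg : G.IsRegularOfDegree k) (n : ℕ) :
    NB G (n+3) = G.adjMatrix ℝ * NB G (n+2) - ((k:ℝ) - 1) • NB G (n+1) := by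
  ext u v
  have lhs : NB G (n+3) u v = ∑ x ∈ G.neighborFinset u, ∑ y ∈ (G.neighborFinset x).erase u, cnt G (n+1) x y v := by
    rw [NB_succ_apply]
    refine Finset.sum_congr rfl fun x hx => ?_
    show (if G.Adj u x then _ else 0) = _
    rw [if_pos ((G.mem_neighborFinset _ _).mp hx)]
  have term1 : (G.adjMatrix ℝ * NB G (n+2)) u v
      = ∑ x ∈ G.neighborFinset u, ∑ y ∈ G.neighborFinset x, cnt G (n+1) x y v := by
    rw [adjMatrix_mul_apply]
    exact Finset.sum_congr rfl fun x _ => NB_succ_apply G (n+1) x v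
  have split : ∀ x ∈ G.neighborFinset u, ∑ y ∈ G.neighborFinset x, cnt G (n+1) x y v
      = cnt G (n+1) x u v + ∑ y ∈ (G.neighborFinset x).erase u, cnt G (n+1) x y v := by
    intro x hx
    exact (Finset.add_sum_erase _ (fun y => cnt G (n+1) x y v) ((G.mem_neighborFinset _ _).mpr ((G.mem_neighborFinset _ _).mp hx).symm)).symm
  have corr : ∑ x ∈ G.neighborFinset u, cnt G (n+1) x u v = ((k:ℝ) - 1) * NB G (n+1) u v := by
    have e1 : ∀ x ∈ G.neighborFinset u, cnt G (n+1) x u v = ∑ z ∈ (G.neighborFinset u).erase x, cnt G n u z v := by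
      intro x hx
      show (if G.Adj x u then _ else 0) = _
      rw [if_pos ((G.mem_neighborFinset _ _).mp hx).symm]
    rw [Finset.sum_congr rfl e1]
    have e2 : ∀ x ∈ G.neighborFinset u, ∑ z ∈ (G.neighborFinset u).erase x, cnt G n u z v
        = (∑ z ∈ G.neighborFinset u, cnt G n u z v) - cnt G n u x v := by
      intro x hx
      rw [← Finset.add_sum_erase _ _ hx]; ring
    rw [Finset.sum_congr rfl e2, Finset.sum_sub_distrib, Finset.sum_const, ← NB_succ_apply,
      show #(G.neighborFinset u) = k from hreg u, nsmul_eq_mul]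
    ring
  rw [Matrix.sub_apply, Matrix.smul_apply, term1, Finset.sum_congr rfl split, Finset.sum_add_distrib, corr, lhs,
    smul_eq_mul]
  ring

lemma aeval_treeF {k : ℕ} (hreg : G.IsRegularOfDegree k) :
    ∀ i, aeval (G.adjMatrix ℝ) (treeF (k:ℝ) i) = NB G i
  | 0 => by show aeval _ (1 : Polynomial ℝ) = _; rw [_root_.map_one]; rfl
  | 1 => by show aeval _ (X : Polynomial ℝ) = _; rw [aeval_X, NB_one]
  | 2 => by
      show aeval _ (X ^ 2 - C (k:ℝ)) = _
      rw [map_sub, map_pow, aeval_X, aeval_C, NB_two G hreg]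
      congr 1
      rw [Algebra.algebraMap_eq_smul_one]
  | (n + 3) => by
      show aeval _ (X * treeF (k:ℝ) (n+2) - C ((k:ℝ) - 1) * treeF (k:ℝ) (n+1)) = _
      rw [map_sub, _root_.map_mul, _root_.map_mul, aeval_X, aeval_C, aeval_treeF hreg (n+2),
        aeval_treeF hreg (n+1), NB_rec G hreg n]
      congr 1
      rw [Algebra.algebraMap_eq_smul_one, smul_mul_assoc, one_mul]

lemma trace_NB_zero : Matrix.trace (NB G 0) = (Fintype.card V : ℝ) := by
  show Matrix.trace (1 : Matrix V V ℝ) = _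
  rw [Matrix.trace_one]

lemma trace_NB_nonneg : ∀ i, 0 ≤ Matrix.trace (NB G i)
  | 0 => by rw [trace_NB_zero]; positivity
  | (n+1) => by
      rw [Matrix.trace]
      refine Finset.sum_nonneg fun u _ => ?_
      show (0:ℝ) ≤ ∑ x, cnt G n u x u
      exact Finset.sum_nonneg fun x _ => cnt_nonneg G n u x u

lemma eig_const {k : ℕ} (hreg : G.IsRegularOfDegree k) (hconn : G.Connected)
    (x : V → ℝ) (hx : G.adjMatrix ℝ *ᵥ x = (k:ℝ) • x) : ∀ a b : V, x a = x b := by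
  have key : ∀ u, ∑ w ∈ G.neighborFinset u, x w = (k:ℝ) * x u := by
    intro u
    have := congrFun hx u
    rwa [adjMatrix_mulVec_apply, Pi.smul_apply, smul_eq_mul] at this
  have hne : Nonempty V := hconn.nonempty
  obtain ⟨a₀, -, ha₀⟩ := Finset.exists_max_image Finset.univ x ⟨Classical.arbitrary V, Finset.mem_univ _⟩
  have hmax : ∀ w, x w ≤ x a₀ := fun w => ha₀ w (Finset.mem_univ w)
  -- neighbors of a max-attaining vertex also attain the max
  have step : ∀ u, x u = x a₀ → ∀ w, G.Adj u w → x w = x a₀ := by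
    intro u hu w hw
    by_contra hne2
    have hlt : x w < x a₀ := lt_of_le_of_ne (hmax w) hne2
    have : ∑ z ∈ G.neighborFinset u, x z < ∑ _z ∈ G.neighborFinset u, x a₀ :=
      Finset.sum_lt_sum (fun z _ => hmax z) ⟨w, (G.mem_neighborFinset _ _).mpr hw, hlt⟩
    rw [key u, Finset.sum_const, show #(G.neighborFinset u) = k from hreg u, nsmul_eq_mul, hu] at this
    exact lt_irrefl _ this
  have walkprop : ∀ {u b : V} (p : G.Walk u b), x u = x a₀ → x b = x a₀ := by
    intro u b p
    induction p with
    | nil => exact id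
    | cons h _ ih => exact fun hu => ih (step _ hu _ h)
  have reach : ∀ b : V, x b = x a₀ := fun b => walkprop ((hconn a₀ b).some) rfl
  intro a b; rw [reach a, reach b]

lemma adj_isHermitian : (G.adjMatrix ℝ).IsHermitian := by
  ext u v
  simp [Matrix.conjTranspose_apply, adjMatrix_apply, G.adj_comm]

lemma mult_one {k : ℕ} (hreg : G.IsRegularOfDegree k) (hconn : G.Connected)
    (i j : V) (hi : (adj_isHermitian G).eigenvalues i = k)
    (hj : (adj_isHermitian G).eigenvalues j = k) : i = j := by
  set hA := adj_isHermitian G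
  by_contra hij
  have bi := hA.mulVec_eigenvectorBasis i
  have bj := hA.mulVec_eigenvectorBasis j
  rw [hi] at bi
  rw [hj] at bj
  have ci := eig_const G hreg hconn _ bi
  have cj := eig_const G hreg hconn _ bj
  have horth : Orthonormal ℝ hA.eigenvectorBasis := hA.eigenvectorBasis.orthonormal
  have h0 : inner ℝ (hA.eigenvectorBasis i) (hA.eigenvectorBasis j) = (0:ℝ) :=
    horth.2 hij
  have h1 : inner ℝ (hA.eigenvectorBasis i) (hA.eigenvectorBasis i) = (1:ℝ) := by
    rw [real_inner_self_eq_norm_sq, horth.1 i]; norm_num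
  have h2 : inner ℝ (hA.eigenvectorBasis j) (hA.eigenvectorBasis j) = (1:ℝ) := by
    rw [real_inner_self_eq_norm_sq, horth.1 j]; norm_num
  have hne : Nonempty V := hconn.nonempty
  set u₀ : V := Classical.arbitrary V
  have expand : ∀ (a b : V → ℝ), (∀ s t, a s = a t) → (∀ s t, b s = b t) →
      (∑ t : V, a t * b t) = (Fintype.card V : ℝ) * (a u₀ * b u₀) := by
    intro a b ha hb
    rw [Finset.sum_congr rfl (fun t _ => by rw [ha t u₀, hb t u₀]), Finset.sum_const,
      Finset.card_univ, nsmul_eq_mul]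
  have inner_eq : ∀ (x y : EuclideanSpace ℝ V), inner ℝ x y = ∑ t : V, x t * y t := by
    intro x y
    rw [PiLp.inner_apply]
    exact Finset.sum_congr rfl fun t _ => by rw [RCLike.inner_apply', starRingEnd_apply, star_trivial]
  rw [inner_eq, expand (fun t => hA.eigenvectorBasis i t) (fun t => hA.eigenvectorBasis i t) ci ci] at h1
  rw [inner_eq, expand (fun t => hA.eigenvectorBasis j t) (fun t => hA.eigenvectorBasis j t) cj cj] at h2
  rw [inner_eq, expand (fun t => hA.eigenvectorBasis i t) (fun t => hA.eigenvectorBasis j t) ci cj] at h0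
  have contra : ((Fintype.card V : ℝ) * (hA.eigenvectorBasis i u₀ * hA.eigenvectorBasis j u₀))^2
      = ((Fintype.card V : ℝ) * (hA.eigenvectorBasis i u₀ * hA.eigenvectorBasis i u₀))
        * ((Fintype.card V : ℝ) * (hA.eigenvectorBasis j u₀ * hA.eigenvectorBasis j u₀)) := by
    ring
  rw [h0, h1, h2] at contra
  norm_num at contra

noncomputable def conjAH (U : Matrix V V ℝ) (h1 : star U * U = 1) (h2 : U * star U = 1) :
    Matrix V V ℝ →ₐ[ℝ] Matrix V V ℝ where
  toFun := fun M => U * M * star U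
  map_one' := by show U * 1 * star U = 1; rw [Matrix.mul_one, h2]
  map_mul' := fun M N => by
    show U * (M * N) * star U = U * M * star U * (U * N * star U)
    simp only [Matrix.mul_assoc]
    rw [← Matrix.mul_assoc (star U) U, h1, Matrix.one_mul]
  map_zero' := by show U * 0 * star U = 0; rw [Matrix.mul_zero, Matrix.zero_mul]
  map_add' := fun M N => by
    show U * (M + N) * star U = U * M * star U + U * N * star U
    rw [Matrix.mul_add, Matrix.add_mul]
  commutes' := fun r => by
    show U * algebraMap ℝ (Matrix V V ℝ) r * star U = algebraMap ℝ (Matrix V V ℝ) r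
    rw [Algebra.algebraMap_eq_smul_one, Matrix.mul_smul, Matrix.mul_one, Matrix.smul_mul, h2]

lemma trace_aeval (f : Polynomial ℝ) :
    Matrix.trace (aeval (G.adjMatrix ℝ) f)
      = ∑ j : V, f.eval ((adj_isHermitian G).eigenvalues j) := by
  set hA := adj_isHermitian G
  set U : Matrix V V ℝ := (hA.eigenvectorUnitary : Matrix V V ℝ) with hU
  have h1 : star U * U = 1 := Unitary.coe_star_mul_self hA.eigenvectorUnitary
  have h2 : U * star U = 1 := Unitary.coe_mul_star_self hA.eigenvectorUnitary
  have hspec : G.adjMatrix ℝ = conjAH U h1 h2 (Matrix.diagonal hA.eigenvalues) := by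
    have := hA.spectral_theorem
    exact this
  have key : aeval (G.adjMatrix ℝ) f
      = U * (aeval (Matrix.diagonal hA.eigenvalues) f) * star U := by
    conv_lhs => rw [hspec]
    exact Polynomial.aeval_algHom_apply (conjAH U h1 h2) _ f
  rw [key, Matrix.trace_mul_cycle, h1, Matrix.one_mul]
  have hdiag : aeval (Matrix.diagonal hA.eigenvalues) f
      = Matrix.diagonal (fun j => f.eval (hA.eigenvalues j)) := by
    have e1 : (Matrix.diagonal hA.eigenvalues : Matrix V V ℝ)
        = Matrix.diagonalAlgHom ℝ hA.eigenvalues := rfl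
    rw [e1, Polynomial.aeval_algHom_apply]
    have e2 : aeval hA.eigenvalues f = fun j => f.eval (hA.eigenvalues j) := by
      funext j
      rw [show (aeval hA.eigenvalues f) j = aeval (hA.eigenvalues j) f from
        (Polynomial.aeval_algHom_apply (Pi.evalAlgHom ℝ (fun _ => ℝ) j) hA.eigenvalues f).symm]
      rw [Polynomial.aeval_def]
      rfl
    rw [e2]
    rfl
  rw [hdiag, Matrix.trace_diagonal]

theorem lp_bound (V : Type) [Fintype V] [DecidableEq V]
    (G : SimpleGraph V) [DecidableRel G.Adj] (k : ℕ) (hk : 2 ≤ k)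
    (hreg : G.IsRegularOfDegree k) (hconn : G.Connected)
    (d : ℕ) (τ : Fin (d + 1) → ℝ) (hτ0 : τ 0 = k) (hτinj : Function.Injective τ)
    (hspec : spectrum ℝ (G.adjMatrix ℝ) = Set.range τ)
    (n : ℕ) (c : ℕ → ℝ) (f : Polynomial ℝ)
    (hf : f = ∑ i ∈ Finset.range (n + 1), C (c i) * treeF (k : ℝ) i)
    (hfk : 0 < f.eval (k : ℝ)) (hfτ : ∀ i : Fin (d + 1), i ≠ 0 → f.eval (τ i) ≤ 0)
    (hc0 : 0 < c 0) (hci : ∀ i, 1 ≤ i → 0 ≤ c i) :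
    (Fintype.card V : ℝ) ≤ f.eval (k : ℝ) / c 0 := by
  classical
  have hA := adj_isHermitian G
  -- Step 1: lower bound for the trace
  have expand : aeval (G.adjMatrix ℝ) f = ∑ i ∈ Finset.range (n + 1), c i • NB G i := by
    rw [hf, map_sum]
    refine Finset.sum_congr rfl fun i _ => ?_
    rw [_root_.map_mul, aeval_C, aeval_treeF G hreg i, Algebra.algebraMap_eq_smul_one,
      smul_mul_assoc, Matrix.one_mul]
  have T3 : c 0 * (Fintype.card V : ℝ) ≤ Matrix.trace (aeval (G.adjMatrix ℝ) f) := by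
    rw [expand, Matrix.trace_sum]
    have sc : ∀ i, Matrix.trace (c i • NB G i) = c i * Matrix.trace (NB G i) := by
      intro i; rw [Matrix.trace_smul, smul_eq_mul]
    calc c 0 * (Fintype.card V : ℝ) = Matrix.trace (c 0 • NB G 0) := by
          rw [sc, trace_NB_zero]
      _ ≤ ∑ i ∈ Finset.range (n + 1), Matrix.trace (c i • NB G i) := by
          refine Finset.single_le_sum (f := fun i => Matrix.trace (c i • NB G i)) (fun i _ => ?_) (Finset.mem_range.mpr (Nat.succ_pos n))
          show (0:ℝ) ≤ (c i • NB G i).trace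
          rw [sc]
          rcases Nat.eq_zero_or_pos i with h0 | h1
          · subst h0; exact mul_nonneg hc0.le (trace_NB_nonneg G 0)
          · exact mul_nonneg (hci i h1) (trace_NB_nonneg G i)
  -- Step 2: upper bound for the trace
  have T1 := trace_aeval G f
  have T2 : (∑ j : V, f.eval (hA.eigenvalues j)) ≤ f.eval (k : ℝ) := by
    have hsplit := Finset.sum_filter_add_sum_filter_not Finset.univ
      (fun j => hA.eigenvalues j = (k : ℝ)) (fun j => f.eval (hA.eigenvalues j))
    set S := Finset.univ.filter (fun j => hA.eigenvalues j = (k : ℝ)) with hS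
    have b1 : (∑ j ∈ S, f.eval (hA.eigenvalues j)) = (S.card : ℝ) * f.eval (k : ℝ) := by
      rw [Finset.sum_congr rfl fun j hj => ?_, Finset.sum_const, nsmul_eq_mul]
      rw [(Finset.mem_filter.mp hj).2]
    have b2 : (∑ j ∈ Finset.univ.filter (fun j => ¬ hA.eigenvalues j = (k : ℝ)),
        f.eval (hA.eigenvalues j)) ≤ 0 := by
      refine Finset.sum_nonpos fun j hj => ?_
      have hjk : hA.eigenvalues j ≠ (k : ℝ) := (Finset.mem_filter.mp hj).2
      have hmem : hA.eigenvalues j ∈ spectrum ℝ (G.adjMatrix ℝ) :=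
        hA.eigenvalues_mem_spectrum_real j
      rw [hspec] at hmem
      obtain ⟨i, hi⟩ := hmem
      have hi0 : i ≠ 0 := by
        intro h; subst h; rw [hτ0] at hi; exact hjk hi.symm
      calc f.eval (hA.eigenvalues j) = f.eval (τ i) := by rw [hi]
        _ ≤ 0 := hfτ i hi0
    have hcard : (S.card : ℝ) ≤ 1 := by
      have : S.card ≤ 1 := Finset.card_le_one.mpr fun a ha b hb =>
        mult_one G hreg hconn a b (Finset.mem_filter.mp ha).2 (Finset.mem_filter.mp hb).2
      exact_mod_cast this
    calc (∑ j : V, f.eval (hA.eigenvalues j))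
        = (∑ j ∈ S, f.eval (hA.eigenvalues j))
          + ∑ j ∈ Finset.univ.filter (fun j => ¬ hA.eigenvalues j = (k : ℝ)),
            f.eval (hA.eigenvalues j) := hsplit.symm
      _ ≤ (S.card : ℝ) * f.eval (k : ℝ) + 0 := by rw [b1]; exact add_le_add_right b2 _
      _ ≤ 1 * f.eval (k : ℝ) + 0 := by
          have := mul_le_mul_of_nonneg_right hcard hfk.le
          linarith
      _ = f.eval (k : ℝ) := by ring
  have final : c 0 * (Fintype.card V : ℝ) ≤ f.eval (k : ℝ) := by
    calc c 0 * (Fintype.card V : ℝ) ≤ Matrix.trace (aeval (G.adjMatrix ℝ) f) := T3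
      _ = ∑ j : V, f.eval (hA.eigenvalues j) := T1
      _ ≤ f.eval (k : ℝ) := T2
  rw [le_div_iff₀ hc0]
  linarith
end

section
/- Let p_0, p_1, … be monic orthogonal polynomials with deg(p_i)=i (with respect to some positive weight on an interval). For any α ∈ ℝ, the polynomial p_n + α·p_{n-1} has n distinct real roots r_1 < … < r_n. -/
open Polynomial MeasureTheory Filter


lemma aux_nonneg_of_even_mult : ∀ (k : ℕ) (w : Polynomial ℝ), w.natDegree ≤ k → w.Monic →
    (∀ x : ℝ, Even (w.rootMultiplicity x)) → ∀ x : ℝ, 0 ≤ w.eval x := by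
  intro k
  induction k using Nat.strong_induction_on with
  | _ k IH =>
    intro w hdegk hm he x
    by_cases hroot : ∃ a : ℝ, w.eval a = 0
    · obtain ⟨a, ha⟩ := hroot
      have hw0 : w ≠ 0 := hm.ne_zero
      have h1 : 0 < w.rootMultiplicity a := (rootMultiplicity_pos hw0).mpr ha
      have h2 : 2 ≤ w.rootMultiplicity a := by
        rcases he a with ⟨m, hm2⟩
        omega
      have hdvd : (X - C a) ^ 2 ∣ w :=
        dvd_trans (pow_dvd_pow _ h2) (pow_rootMultiplicity_dvd w a)
      obtain ⟨u, hu⟩ := hdvd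
      have hXa : ((X - C a) ^ 2 : Polynomial ℝ).Monic := (monic_X_sub_C a).pow 2
      have humon : u.Monic := by
        have := hm
        rw [hu] at this
        exact hXa.of_mul_monic_left this
      have hu0 : u ≠ 0 := humon.ne_zero
      have hdeg : w.natDegree = 2 + u.natDegree := by
        rw [hu, natDegree_mul (hXa.ne_zero) hu0, natDegree_pow]
        simp [natDegree_X_sub_C]
      have heu : ∀ y : ℝ, Even (u.rootMultiplicity y) := by
        intro y
        have hmul : w.rootMultiplicity y =
            ((X - C a) ^ 2).rootMultiplicity y + u.rootMultiplicity y := by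
          rw [hu]
          exact rootMultiplicity_mul (by rw [← hu]; exact hw0)
        have hXa2 : Even (((X - C a) ^ 2 : Polynomial ℝ).rootMultiplicity y) := by
          have : ((X - C a) ^ 2 : Polynomial ℝ) = (X - C a) * (X - C a) := by ring
          rw [this, rootMultiplicity_mul (by simp [X_sub_C_ne_zero])]
          exact Even.add_self _
        have := he y
        rw [hmul] at this
        exact (Nat.even_add.mp this).mp hXa2
      have hlt : u.natDegree < k := by omega
      have := IH u.natDegree hlt u le_rfl humon heu x
      rw [hu]
      simp only [eval_mul, eval_pow, eval_sub, eval_X, eval_C]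
      exact mul_nonneg (sq_nonneg _) this
    · push_neg at hroot
      by_cases hd0 : w.natDegree = 0
      · have : w = 1 := hm.natDegree_eq_zero.mp hd0
        simp [this]
      · have hdegpos : 0 < w.degree := natDegree_pos_iff_degree_pos.mp (Nat.pos_of_ne_zero hd0)
        have htt : Tendsto (fun y => w.eval y) atTop atTop :=
          tendsto_atTop_of_leadingCoeff_nonneg w hdegpos (by rw [hm.leadingCoeff]; norm_num)
        obtain ⟨b, hb⟩ := ((htt.eventually_ge_atTop 1).and (eventually_ge_atTop x)).exists
        by_contra hneg
        push_neg at hneg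
        have hcont : ContinuousOn (fun y => w.eval y) (Set.Icc x b) :=
          (Polynomial.continuous w).continuousOn
        have : (0 : ℝ) ∈ Set.Icc (w.eval x) (w.eval b) := ⟨hneg.le, by linarith [hb.1]⟩
        obtain ⟨c, _, hc⟩ := intermediate_value_Icc hb.2 hcont this
        exact hroot c hc


lemma aux_integral_pos (μ : Measure ℝ)
    (hint : ∀ q : Polynomial ℝ, Integrable (fun x => q.eval x) μ)
    (hpos : ∀ q : Polynomial ℝ, q ≠ 0 → 0 < ∫ x, (q.eval x) ^ 2 ∂μ)
    (f : Polynomial ℝ) (hf0 : f ≠ 0) (hfn : ∀ x : ℝ, 0 ≤ f.eval x) :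
    0 < ∫ x, f.eval x ∂μ := by
  have h0 : 0 ≤ ∫ x, f.eval x ∂μ := integral_nonneg fun x => hfn x
  rcases h0.lt_or_eq with h | h
  · exact h
  exfalso
  classical
  have hae : (fun x => f.eval x) =ᵐ[μ] 0 :=
    (integral_eq_zero_iff_of_nonneg (fun x => hfn x) (hint f)).mp h.symm
  set s : Polynomial ℝ := ∏ z ∈ f.roots.toFinset, (X - C z) with hs
  have hsm : s.Monic := monic_prod_of_monic _ _ fun z _ => monic_X_sub_C z
  have hs0 : s ≠ 0 := hsm.ne_zero
  have hae2 : ∀ᵐ x ∂μ, (s.eval x) ^ 2 = 0 := by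
    filter_upwards [hae] with x hx
    have hx' : f.eval x = 0 := hx
    have hxr : x ∈ f.roots.toFinset := by
      rw [Multiset.mem_toFinset, mem_roots hf0]
      exact hx'
    have : s.eval x = 0 := by
      rw [hs, eval_prod]
      exact Finset.prod_eq_zero hxr (by simp)
    simp [this]
  have : ∫ x, (s.eval x) ^ 2 ∂μ = 0 := by
    rw [integral_congr_ae hae2]
    simp
  exact absurd (hpos s hs0) (by simp [this])


lemma aux_orth_lower (μ : Measure ℝ) (p : ℕ → Polynomial ℝ)
    (hmonic : ∀ i, (p i).Monic) (hdeg : ∀ i, (p i).natDegree = i)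
    (hint : ∀ q : Polynomial ℝ, Integrable (fun x => q.eval x) μ)
    (horth : ∀ i j, i ≠ j → ∫ x, (p i).eval x * (p j).eval x ∂μ = 0) :
    ∀ (k : ℕ) (i : ℕ), k < i → ∀ h : Polynomial ℝ, h.natDegree ≤ k →
      ∫ x, (p i).eval x * h.eval x ∂μ = 0 := by
  intro k
  induction k with
  | zero =>
    intro i hi h hh
    have hp0 : p 0 = 1 := (hmonic 0).natDegree_eq_zero.mp (hdeg 0)
    have hc : h = C (h.coeff 0) := eq_C_of_natDegree_le_zero hh
    have hbase : ∫ x, (p i).eval x ∂μ = 0 := by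
      have := horth i 0 (by omega)
      simpa [hp0] using this
    calc ∫ x, (p i).eval x * h.eval x ∂μ = ∫ x, (p i).eval x * h.coeff 0 ∂μ := by
          rw [hc]; simp
      _ = (∫ x, (p i).eval x ∂μ) * h.coeff 0 := integral_mul_const _ _
      _ = 0 := by rw [hbase]; ring
  | succ k IH =>
    intro i hi h hh
    by_cases hle : h.natDegree ≤ k
    · exact IH i (by omega) h hle
    have hd : h.natDegree = k + 1 := by omega
    set c := h.leadingCoeff with hcdef
    set h' := h - C c * p (k + 1) with hh'
    have hh'deg : h'.natDegree ≤ k := by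
      rw [natDegree_le_iff_coeff_eq_zero]
      intro m hm
      rw [hh']
      simp only [coeff_sub, coeff_C_mul]
      rcases eq_or_lt_of_le (Nat.succ_le_of_lt hm) with heq | hgt
      · rw [← heq]
        have h1 : h.coeff (k+1) = c := by rw [hcdef, ← hd, leadingCoeff]
        have h2 : (p (k+1)).coeff (k+1) = 1 := by
          have := (hmonic (k+1)).leadingCoeff
          rwa [leadingCoeff, hdeg] at this
        rw [h1, h2]; ring
      · have h1 : h.coeff m = 0 := coeff_eq_zero_of_natDegree_lt (by omega)
        have h2 : (p (k+1)).coeff m = 0 := coeff_eq_zero_of_natDegree_lt (by rw [hdeg]; omega)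
        rw [h1, h2]; ring
    have hsplit : ∀ x : ℝ, (p i).eval x * h.eval x =
        (p i).eval x * h'.eval x + c * ((p i).eval x * (p (k+1)).eval x) := by
      intro x
      rw [hh']
      simp only [eval_sub, eval_mul, eval_C]
      ring
    have hint1 : Integrable (fun x => (p i).eval x * h'.eval x) μ := by
      simpa [eval_mul] using hint (p i * h')
    have hint2 : Integrable (fun x => c * ((p i).eval x * (p (k+1)).eval x)) μ := by
      have : Integrable (fun x => (p i).eval x * (p (k+1)).eval x) μ := by
        simpa [eval_mul] using hint (p i * p (k+1))
      exact this.const_mul c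
    calc ∫ x, (p i).eval x * h.eval x ∂μ
        = ∫ x, ((p i).eval x * h'.eval x + c * ((p i).eval x * (p (k+1)).eval x)) ∂μ := by
          exact integral_congr_ae (Filter.Eventually.of_forall fun x => hsplit x)
      _ = (∫ x, (p i).eval x * h'.eval x ∂μ)
          + ∫ x, c * ((p i).eval x * (p (k+1)).eval x) ∂μ := integral_add hint1 hint2
      _ = 0 + c * ∫ x, (p i).eval x * (p (k+1)).eval x ∂μ := by
          rw [IH i (by omega) h' hh'deg, MeasureTheory.integral_const_mul]
      _ = 0 := by rw [horth i (k+1) (by omega)]; ring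

theorem quasi_orthogonal_real_distinct_roots (μ : Measure ℝ) (p : ℕ → Polynomial ℝ)
    (hmonic : ∀ i, (p i).Monic) (hdeg : ∀ i, (p i).natDegree = i)
    (hint : ∀ q : Polynomial ℝ, Integrable (fun x => q.eval x) μ)
    (hpos : ∀ q : Polynomial ℝ, q ≠ 0 → 0 < ∫ x, (q.eval x) ^ 2 ∂μ)
    (horth : ∀ i j, i ≠ j → ∫ x, (p i).eval x * (p j).eval x ∂μ = 0)
    (n : ℕ) (α : ℝ) :
    ∃ r : Fin (n + 1) → ℝ, StrictMono r ∧
      p (n + 1) + C α * p n = ∏ i, (X - C (r i)) := by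
  classical
  set q : Polynomial ℝ := p (n + 1) + C α * p n with hqdef
  have hdlt : (C α * p n).degree < (p (n + 1)).degree := by
    calc (C α * p n).degree ≤ (p n).degree := by
          rcases eq_or_ne α 0 with h | h
          · simp [h]
          · rw [degree_C_mul h]
      _ < (p (n + 1)).degree := by
          rw [degree_eq_natDegree (hmonic n).ne_zero,
            degree_eq_natDegree (hmonic (n+1)).ne_zero, hdeg, hdeg]
          exact_mod_cast Nat.lt_succ_self n
  have hqm : q.Monic := (hmonic (n + 1)).add_of_left hdlt
  have hq0 : q ≠ 0 := hqm.ne_zero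
  have hqdeg : q.natDegree = n + 1 := by
    rw [hqdef, natDegree_eq_of_degree_eq (degree_add_eq_left_of_degree_lt hdlt), hdeg]
  set T : Finset ℝ := q.roots.toFinset.filter (fun x => Odd (q.rootMultiplicity x)) with hT
  set h : Polynomial ℝ := ∏ t ∈ T, (X - C t) with hhdef
  have hhm : h.Monic := monic_prod_of_monic _ _ fun t _ => monic_X_sub_C t
  have hdvd : h ∣ q := by
    have h1 : h ∣ ∏ t ∈ q.roots.toFinset, (X - C t) :=
      Finset.prod_dvd_prod_of_subset T _ _ (Finset.filter_subset _ _)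
    have h2 : (∏ t ∈ q.roots.toFinset, (X - C t)) ∣ (q.roots.map fun a => X - C a).prod := by
      rw [Finset.prod_eq_multiset_prod]
      have : q.roots.toFinset.val.map (fun t => X - C t) ≤ q.roots.map fun a => X - C a :=
        Multiset.map_le_map (Multiset.dedup_le _)
      exact Multiset.prod_dvd_prod_of_le this
    exact h1.trans (h2.trans (prod_multiset_X_sub_C_dvd q))
  obtain ⟨w, hw⟩ := hdvd
  have hw0 : w ≠ 0 := by
    intro h0; rw [h0, mul_zero] at hw; exact hq0 hw
  have hwm : w.Monic := hhm.of_mul_monic_left (hw ▸ hqm)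
  have hmulth : ∀ x : ℝ, rootMultiplicity x h = if x ∈ T then 1 else 0 := by
    intro x
    rw [← count_roots, hhdef, roots_prod_X_sub_C]
    by_cases hx : x ∈ T
    · rw [if_pos hx]
      exact Multiset.count_eq_one_of_mem T.nodup hx
    · rw [if_neg hx]
      exact Multiset.count_eq_zero_of_notMem hx
  have hmultq : ∀ x : ℝ, q.rootMultiplicity x =
      h.rootMultiplicity x + w.rootMultiplicity x := by
    intro x
    rw [hw]
    exact rootMultiplicity_mul (hw ▸ hq0)
  have heven : ∀ x : ℝ, Even (w.rootMultiplicity x) := by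
    intro x
    by_cases hx : x ∈ T
    · have hodd : Odd (q.rootMultiplicity x) := (Finset.mem_filter.mp hx).2
      have := hmultq x
      rw [hmulth x, if_pos hx] at this
      rcases hodd with ⟨m, hm⟩
      exact ⟨m, by omega⟩
    · have hqe : Even (q.rootMultiplicity x) := by
        by_contra hodd
        rw [Nat.not_even_iff_odd] at hodd
        have hpos' : 0 < q.rootMultiplicity x := by
          rcases hodd with ⟨m, hm⟩; omega
        have hroot : x ∈ q.roots.toFinset := by
          rw [Multiset.mem_toFinset, mem_roots hq0]
          exact (rootMultiplicity_pos hq0).mp hpos'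
        exact hx (Finset.mem_filter.mpr ⟨hroot, hodd⟩)
      have h2 := hmultq x
      rw [hmulth x, if_neg hx] at h2
      rcases hqe with ⟨m, hm⟩
      exact ⟨m, by omega⟩
  have hhd : h.natDegree = T.card := by
    rw [hhdef, natDegree_prod _ _ (fun t _ => X_sub_C_ne_zero t)]
    simp [natDegree_X_sub_C]
  have hsum : T.card + w.natDegree = n + 1 := by
    have := natDegree_mul hhm.ne_zero hw0
    rw [← hw, hqdeg, hhd] at this
    omega
  -- Step A : T.card ≥ n
  have hTge : n ≤ T.card := by
    by_contra hlt
    push_neg at hlt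
    have hhdle : h.natDegree < n := by omega
    have hA := aux_orth_lower μ p hmonic hdeg hint horth h.natDegree (n + 1)
      (by omega) h le_rfl
    have hB := aux_orth_lower μ p hmonic hdeg hint horth h.natDegree n
      hhdle h le_rfl
    have hint1 : Integrable (fun x => (p (n+1)).eval x * h.eval x) μ := by
      simpa [eval_mul] using hint (p (n+1) * h)
    have hint2 : Integrable (fun x => α * ((p n).eval x * h.eval x)) μ := by
      have : Integrable (fun x => (p n).eval x * h.eval x) μ := by
        simpa [eval_mul] using hint (p n * h)
      exact this.const_mul α
    have hzero : ∫ x, q.eval x * h.eval x ∂μ = 0 := by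
      calc ∫ x, q.eval x * h.eval x ∂μ
          = ∫ x, ((p (n+1)).eval x * h.eval x + α * ((p n).eval x * h.eval x)) ∂μ := by
            apply integral_congr_ae (Filter.Eventually.of_forall fun x => ?_)
            rw [hqdef]; simp only [eval_add, eval_mul, eval_C]; ring
        _ = (∫ x, (p (n+1)).eval x * h.eval x ∂μ)
            + ∫ x, α * ((p n).eval x * h.eval x) ∂μ := integral_add hint1 hint2
        _ = 0 + α * ∫ x, (p n).eval x * h.eval x ∂μ := by
            rw [hA, MeasureTheory.integral_const_mul]
        _ = 0 := by rw [hB]; ring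
    have hwnn : ∀ x : ℝ, 0 ≤ w.eval x :=
      aux_nonneg_of_even_mult w.natDegree w le_rfl hwm heven
    have hfnn : ∀ x : ℝ, 0 ≤ (q * h).eval x := by
      intro x
      have : (q * h).eval x = (h.eval x) ^ 2 * w.eval x := by
        rw [hw]; simp only [eval_mul]; ring
      rw [this]
      exact mul_nonneg (sq_nonneg _) (hwnn x)
    have hf0 : q * h ≠ 0 := mul_ne_zero hq0 hhm.ne_zero
    have hgt := aux_integral_pos μ hint hpos (q * h) hf0 hfnn
    rw [show (fun x => (q * h).eval x) = fun x => q.eval x * h.eval x by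
      funext x; simp [eval_mul]] at hgt
    rw [hzero] at hgt
    exact lt_irrefl 0 hgt
  -- Step B : T.card ≠ n
  have hTne : T.card ≠ n := by
    intro hTcn
    have hwd : w.natDegree = 1 := by omega
    have hweq : w = X + C (w.coeff 0) := hwm.eq_X_add_C hwd
    set s : ℝ := -(w.coeff 0) with hs
    have hweq' : w = X - C s := by rw [hweq, hs]; simp
    have hmw : w.rootMultiplicity s = 1 := by
      rw [hweq']; exact rootMultiplicity_X_sub_C_self
    by_cases hsT : s ∈ T
    · have hodd : Odd (q.rootMultiplicity s) := (Finset.mem_filter.mp hsT).2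
      have := hmultq s
      rw [hmulth s, if_pos hsT, hmw] at this
      rcases hodd with ⟨m, hm⟩
      omega
    · have := hmultq s
      rw [hmulth s, if_neg hsT, hmw] at this
      have hroot : s ∈ q.roots.toFinset := by
        rw [Multiset.mem_toFinset, mem_roots hq0]
        exact (rootMultiplicity_pos hq0).mp (by omega)
      exact hsT (Finset.mem_filter.mpr ⟨hroot, by rw [this]; exact odd_one⟩)
  have hTcard : T.card = n + 1 := by omega
  have hwd0 : w.natDegree = 0 := by omega
  have hw1 : w = 1 := hwm.natDegree_eq_zero.mp hwd0
  have hqh : q = h := by rw [hw, hw1, mul_one]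
  set e := T.orderIsoOfFin hTcard with he
  refine ⟨fun i => (e i : ℝ), ?_, ?_⟩
  · intro i j hij
    exact_mod_cast e.strictMono hij
  · rw [hqh]
    calc h = ∏ t ∈ T, (X - C t) := hhdef
      _
        = ∏ t : T, (X - C (t : ℝ)) := (Finset.prod_coe_sort T _).symm
      _ = ∏ i : Fin (n+1), (X - C ((e i : ℝ))) :=
          (Equiv.prod_comp e.toEquiv (fun t : T => (X - C (t : ℝ)))).symm
end

section
/- Let G be a connected k-regular simple graph of girth g whose adjacency matrix A has d+1 distinct eigenvalues, with g ≥ 2d. Then F_i^{(k)}(A) = A_i for all 0 ≤ i ≤ d-1, where A_i is the i-th distance matrix of G. -/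
open Polynomial

namespace TreeFAux

open SimpleGraph Finset

variable {V : Type} [Fintype V] [DecidableEq V] {G : SimpleGraph V}

/-- If `u` is an interior-or-final vertex of a walk from `w` to `v` (and `u ≠ w`), then
`dist u v + 1 ≤ length`. -/
lemma dist_add_one_le {u v w : V} (p : G.Walk w v) (hu : u ∈ p.support)
    (hne : u ≠ w) : G.dist u v + 1 ≤ p.length := by
  have hs := p.take_spec hu
  have h1 : G.dist u v ≤ (p.dropUntil u hu).length := SimpleGraph.dist_le _
  have h2 : 1 ≤ (p.takeUntil u hu).length := by
    rcases Nat.eq_zero_or_pos (p.takeUntil u hu).length with h | h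
    · exact absurd (SimpleGraph.Walk.eq_of_length_eq_zero h).symm hne
    · exact h
  have h3 : (p.takeUntil u hu).length + (p.dropUntil u hu).length = p.length := by
    rw [← SimpleGraph.Walk.length_append, hs]
  omega

/-- Two paths with the same endpoints and total length less than the girth bound coincide. -/
lemma path_unique {n : ℕ}
    (hgirth : ∀ (a : V) (c : G.Walk a a), c.IsCycle → n ≤ c.length) :
    ∀ (u v : V) (p : G.Walk u v), p.IsPath → ∀ (q : G.Walk u v), q.IsPath →
      p.length + q.length < n → p = q := by
  intro u v p
  induction p with
  | nil =>
    intro _ q hq _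
    exact ((SimpleGraph.Walk.isPath_iff_eq_nil (p := q)).mp hq).symm
  | @cons u w v h p ih =>
    intro hp q hq hlen
    cases q with
    | nil =>
      exact absurd (SimpleGraph.Walk.isPath_iff_eq_nil.mp hp) (by simp)
    | @cons _ w' _ h' q' =>
      rcases SimpleGraph.Walk.cons_isPath_iff _ _ |>.mp hp with ⟨hp', hup⟩
      rcases SimpleGraph.Walk.cons_isPath_iff _ _ |>.mp hq with ⟨hq', huq⟩
      by_cases hww : w = w'
      · subst hww
        have := ih hp' q' hq' (by
          simp only [SimpleGraph.Walk.length_cons] at hlen; omega)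
        rw [this]
      · exfalso
        -- build a cycle through u of length ≤ p.length + q.length + ... < n
        set r : G.Walk w w' := (p.append q'.reverse).bypass with hr
        have hrpath : r.IsPath := SimpleGraph.Walk.bypass_isPath _
        have hru : u ∉ r.support := by
          intro hmem
          have := SimpleGraph.Walk.support_bypass_subset _ hmem
          rw [SimpleGraph.Walk.support_append] at this
          rcases List.mem_append.mp this with h1 | h1
          · exact hup h1
          · have h2 := List.mem_of_mem_tail h1
            rw [SimpleGraph.Walk.support_reverse] at h2
            exact huq (List.mem_reverse.mp h2)
        have hrlen : r.length ≤ p.length + q'.length := by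
          have := SimpleGraph.Walk.length_bypass_le (p.append q'.reverse)
          simpa using this
        -- the cycle
        have hcyc : (SimpleGraph.Walk.cons h (r.concat h'.symm)).IsCycle := by
          rw [SimpleGraph.Walk.cons_isCycle_iff]
          constructor
          · -- (r.concat h'.symm).IsPath
            rw [SimpleGraph.Walk.isPath_def, SimpleGraph.Walk.support_concat]
            rw [SimpleGraph.Walk.isPath_def] at hrpath
            simp only [List.concat_eq_append, List.nodup_append]
            exact ⟨hrpath, List.nodup_singleton u, by
              intro a ha b hb
              simp only [List.mem_singleton] at hb
              subst hb; exact fun hab => hru (hab ▸ ha)⟩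
          · intro hmem
            rw [SimpleGraph.Walk.edges_concat] at hmem
            simp only [List.concat_eq_append, List.mem_append, List.mem_singleton] at hmem
            rcases hmem with hmem | hmem
            · exact hru (SimpleGraph.Walk.fst_mem_support_of_mem_edges r hmem)
            · rw [Sym2.eq_iff] at hmem
              rcases hmem with ⟨h1, h2⟩ | ⟨h1, h2⟩
              · exact h'.ne h1
              · exact hww h2
        have := hgirth u _ hcyc
        simp only [SimpleGraph.Walk.length_cons, SimpleGraph.Walk.length_concat] at this
        simp only [SimpleGraph.Walk.length_cons] at hlen
        omega

lemma adj_dist_le {u w v : V} (hconn : G.Connected) (h : G.Adj u w) :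
    G.dist u v ≤ G.dist w v + 1 := by
  have ht := hconn.dist_triangle (u := u) (v := w) (w := v)
  have h1 : G.dist u w = 1 := SimpleGraph.dist_eq_one_iff_adj.mpr h
  omega

/-- Existence and uniqueness of the neighbor of `u` one step closer to `v`. -/
lemma exists_unique_closer {n : ℕ}
    (hconn : G.Connected)
    (huniq : ∀ (u v : V) (p : G.Walk u v), p.IsPath → ∀ (q : G.Walk u v), q.IsPath →
      p.length + q.length < n → p = q)
    {u v : V} {i : ℕ} (hdist : G.dist u v = i + 1) (hn : 2 * i + 2 < n) :
    ∃! w, G.Adj u w ∧ G.dist w v = i := by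
  obtain ⟨p, hp, hlen⟩ := hconn.exists_path_of_dist u v
  rw [hdist] at hlen
  cases p with
  | nil => simp at hlen
  | @cons _ w _ h p' =>
    simp only [SimpleGraph.Walk.length_cons, Nat.add_right_cancel_iff] at hlen
    have hwd : G.dist w v = i := by
      have h1 : G.dist w v ≤ i := hlen ▸ SimpleGraph.dist_le p'
      have h2 := adj_dist_le (v := v) hconn h
      omega
    refine ⟨w, ⟨h, hwd⟩, ?_⟩
    -- uniqueness: any neighbor w' at distance i equals w
    have key : ∀ w' : V, G.Adj u w' → G.dist w' v = i →
        ∀ w'' : V, G.Adj u w'' → G.dist w'' v = i → w' = w'' := by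
      intro w1 h1 hd1 w2 h2 hd2
      obtain ⟨p1, hp1, hl1⟩ := hconn.exists_path_of_dist w1 v
      obtain ⟨p2, hp2, hl2⟩ := hconn.exists_path_of_dist w2 v
      rw [hd1] at hl1; rw [hd2] at hl2
      have hu1 : u ∉ p1.support := by
        intro hm
        have := dist_add_one_le p1 hm h1.ne
        omega
      have hu2 : u ∉ p2.support := by
        intro hm
        have := dist_add_one_le p2 hm h2.ne
        omega
      have hP1 : (SimpleGraph.Walk.cons h1 p1).IsPath :=
        (SimpleGraph.Walk.cons_isPath_iff _ _).mpr ⟨hp1, hu1⟩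
      have hP2 : (SimpleGraph.Walk.cons h2 p2).IsPath :=
        (SimpleGraph.Walk.cons_isPath_iff _ _).mpr ⟨hp2, hu2⟩
      have heq := huniq u v _ hP1 _ hP2 (by
        simp only [SimpleGraph.Walk.length_cons]; omega)
      have := congrArg (fun q => SimpleGraph.Walk.getVert q 1) heq
      simpa [SimpleGraph.Walk.getVert_cons_succ] using this
    intro w' hw'
    exact key w' hw'.1 hw'.2 w h hwd

/-- No neighbor of `u` is at the same distance from `v` as `u` (short distances). -/
lemma no_same_dist {n : ℕ}
    (hconn : G.Connected)
    (huniq : ∀ (u v : V) (p : G.Walk u v), p.IsPath → ∀ (q : G.Walk u v), q.IsPath →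
      p.length + q.length < n → p = q)
    {u v w : V} {i : ℕ} (hdist : G.dist u v = i) (hadj : G.Adj u w)
    (hn : 2 * i + 1 < n) : G.dist w v ≠ i := by
  intro hw
  obtain ⟨p1, hp1, hl1⟩ := hconn.exists_path_of_dist u v
  obtain ⟨pw, hpw, hlw⟩ := hconn.exists_path_of_dist w v
  rw [hdist] at hl1; rw [hw] at hlw
  have hu : u ∉ pw.support := by
    intro hm
    have := dist_add_one_le pw hm hadj.ne
    omega
  have hP2 : (SimpleGraph.Walk.cons hadj pw).IsPath :=
    (SimpleGraph.Walk.cons_isPath_iff _ _).mpr ⟨hpw, hu⟩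
  have heq := huniq u v p1 hp1 _ hP2 (by
    simp only [SimpleGraph.Walk.length_cons]; omega)
  have := congrArg SimpleGraph.Walk.length heq
  simp only [SimpleGraph.Walk.length_cons] at this
  omega

end TreeFAux

open TreeFAux SimpleGraph Finset

theorem treeF_eq_distance_matrix (V : Type) [Fintype V] [DecidableEq V]
    (G : SimpleGraph V) [DecidableRel G.Adj] (k : ℕ) (hk : 2 ≤ k)
    (hreg : G.IsRegularOfDegree k) (hconn : G.Connected) (d : ℕ)
    (hd : (spectrum ℝ (G.adjMatrix ℝ)).ncard = d + 1)
    (hg : ((2 * d : ℕ) : ℕ∞) ≤ G.girth) :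
    ∀ i, i < d →
      Polynomial.aeval (G.adjMatrix ℝ) (treeF (k : ℝ) i) =
        Matrix.of (fun u v => if G.dist u v = i then (1 : ℝ) else 0) := by
  classical
  -- distance matrices
  set D : ℕ → Matrix V V ℝ :=
    fun i => Matrix.of (fun u v => if G.dist u v = i then (1 : ℝ) else 0) with hD
  -- girth as a bound on cycles
  have hgirth : ∀ (a : V) (c : G.Walk a a), c.IsCycle → 2 * d ≤ c.length := by
    intro a c hc
    have h1 : G.egirth ≤ (c.length : ℕ∞) := by
      exact (SimpleGraph.le_egirth.mp le_rfl) a c hc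
    have h2 : G.girth ≤ c.length := by
      have := ENat.toNat_le_toNat h1 (by simp)
      simpa [SimpleGraph.girth] using this
    have h3 : 2 * d ≤ G.girth := by exact_mod_cast hg
    omega
  have huniq : ∀ (u v : V) (p : G.Walk u v), p.IsPath → ∀ (q : G.Walk u v), q.IsPath →
      p.length + q.length < 2 * d → p = q := path_unique hgirth
  -- product entries count neighbors at given distance
  have hprod : ∀ (i : ℕ) (u v : V),
      (G.adjMatrix ℝ * D i) u v =
        ((G.neighborFinset u).filter (fun w => G.dist w v = i)).card := by
    intro i u v
    rw [SimpleGraph.adjMatrix_mul_apply]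
    simp only [hD, Matrix.of_apply]
    rw [Finset.sum_boole]
  -- cardinality one
  have hcard_one : ∀ {u v : V} {i : ℕ}, G.dist u v = i + 1 → 2 * i + 2 < 2 * d →
      ((G.neighborFinset u).filter (fun w => G.dist w v = i)).card = 1 := by
    intro u v i hdist hn
    obtain ⟨w0, hw0, huni⟩ := exists_unique_closer hconn huniq hdist hn
    rw [Finset.card_eq_one]
    refine ⟨w0, ?_⟩
    ext w
    simp only [Finset.mem_filter, SimpleGraph.mem_neighborFinset, Finset.mem_singleton]
    constructor
    · intro hw; exact huni w hw
    · intro hw; subst hw; exact hw0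
  -- cardinality zero when same distance
  have hcard_zero_same : ∀ {u v : V} {i : ℕ}, G.dist u v = i → 2 * i + 1 < 2 * d →
      ((G.neighborFinset u).filter (fun w => G.dist w v = i)).card = 0 := by
    intro u v i hdist hn
    rw [Finset.card_eq_zero, Finset.filter_eq_empty_iff]
    intro w hw
    exact no_same_dist hconn huniq hdist (SimpleGraph.mem_neighborFinset _ _ _ |>.mp hw) hn
  -- cardinality zero when distances far apart
  have hcard_zero_far : ∀ {u v : V} {i j : ℕ}, G.dist u v = j →
      (j + 2 ≤ i ∨ i + 2 ≤ j) →
      ((G.neighborFinset u).filter (fun w => G.dist w v = i)).card = 0 := by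
    intro u v i j hdist hfar
    rw [Finset.card_eq_zero, Finset.filter_eq_empty_iff]
    intro w hw hdw
    have hadj := SimpleGraph.mem_neighborFinset _ _ _ |>.mp hw
    have h1 := adj_dist_le (v := v) hconn hadj
    have h2 := adj_dist_le (v := v) hconn hadj.symm
    omega
  -- neighbors count
  have hnb : ∀ u : V, (G.neighborFinset u).card = k := fun u => hreg u
  -- first product identity : A * D 1 = D 2 + k • D 0  (needs 2 < d)
  have hM1 : 2 < d → G.adjMatrix ℝ * D 1 = D 2 + (k : ℝ) • D 0 := by
    intro h2
    ext u v
    rw [hprod]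
    simp only [Matrix.add_apply, Matrix.smul_apply, hD, Matrix.of_apply, smul_eq_mul]
    rcases Nat.lt_or_ge (G.dist u v) 3 with hj | hj
    · have hcase : G.dist u v = 0 ∨ G.dist u v = 1 ∨ G.dist u v = 2 := by omega
      rcases hcase with h0 | h0 | h0
      · -- dist 0 : u = v
        have huv : u = v := (hconn.dist_eq_zero_iff).mp h0
        subst huv
        have : (G.neighborFinset u).filter (fun w => G.dist w u = 1) = G.neighborFinset u := by
          apply Finset.filter_true_of_mem
          intro w hw
          exact SimpleGraph.dist_eq_one_iff_adj.mpr
            ((SimpleGraph.mem_neighborFinset _ _ _ |>.mp hw).symm)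
        rw [this, hnb]
        simp [h0]
      · -- dist 1
        rw [hcard_zero_same h0 (by omega)]
        simp [h0]
      · -- dist 2
        rw [hcard_one h0 (by omega)]
        simp [h0]
    · rw [hcard_zero_far rfl (Or.inr (by omega))]
      have h1 : G.dist u v ≠ 2 := by omega
      have h2 : G.dist u v ≠ 0 := by omega
      simp [h1, h2]
  -- general product identity: A * D (m+2) = D (m+3) + (k-1) • D (m+1)  (needs m+3 < d)
  have hM2 : ∀ m : ℕ, m + 3 < d →
      G.adjMatrix ℝ * D (m + 2) = D (m + 3) + ((k : ℝ) - 1) • D (m + 1) := by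
    intro m hm
    ext u v
    rw [hprod]
    simp only [Matrix.add_apply, Matrix.smul_apply, hD, Matrix.of_apply, smul_eq_mul]
    rcases Nat.lt_or_ge (G.dist u v) (m + 4) with hj4 | hj4
    · rcases Nat.lt_or_ge (G.dist u v) (m + 1) with hj1 | hj1
      · -- j ≤ m : far
        rw [hcard_zero_far rfl (Or.inl (by omega))]
        have h1 : G.dist u v ≠ m + 3 := by omega
        have h2 : G.dist u v ≠ m + 1 := by omega
        simp [h1, h2]
      · -- j ∈ {m+1, m+2, m+3}
        have hcase : G.dist u v = m + 1 ∨ G.dist u v = m + 2 ∨ G.dist u v = m + 3 := by omega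
        rcases hcase with hc | hc | hc
        · -- j = m + 1 : count is k - 1
          have hfilter : (G.neighborFinset u).filter (fun w => ¬ G.dist w v = m + 2) =
              (G.neighborFinset u).filter (fun w => G.dist w v = m) := by
            apply Finset.filter_congr
            intro w hw
            have hadj := SimpleGraph.mem_neighborFinset _ _ _ |>.mp hw
            have h1 := adj_dist_le (v := v) hconn hadj
            have h2 := adj_dist_le (v := v) hconn hadj.symm
            have h3 : G.dist w v ≠ m + 1 :=
              no_same_dist hconn huniq hc hadj (by omega)
            rw [hc] at h1 h2
            constructor
            · intro hne; omega
            · intro heq; omega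
          have hsplit : ((G.neighborFinset u).filter (fun w => G.dist w v = m + 2)).card +
              ((G.neighborFinset u).filter (fun w => ¬ G.dist w v = m + 2)).card =
              (G.neighborFinset u).card :=
            Finset.card_filter_add_card_filter_not _
          rw [hfilter] at hsplit
          have hone : ((G.neighborFinset u).filter (fun w => G.dist w v = m)).card = 1 := by
            rcases m with _ | m'
            · -- m = 0 : the unique neighbor at distance 0 is v itself
              apply hcard_one hc (by omega)
            · apply hcard_one hc (by omega)
          rw [hone, hnb] at hsplit
          have hcard : ((G.neighborFinset u).filter (fun w => G.dist w v = m + 2)).card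
              = k - 1 := by omega
          rw [hcard]
          have h1 : ¬ (m + 1 = m + 3) := by omega
          have hcast : ((k - 1 : ℕ) : ℝ) = (k : ℝ) - 1 := by
            have h1k : (1 : ℕ) ≤ k := by omega
            push_cast [h1k]
            ring
          simp [hc, h1, hcast]
        · -- j = m + 2 : count 0
          rw [hcard_zero_same hc (by omega)]
          have h1 : ¬ (m + 2 = m + 3) := by omega
          have h2 : ¬ (m + 2 = m + 1) := by omega
          simp [hc, h1, h2]
        · -- j = m + 3 : count 1
          rw [hcard_one (by omega : G.dist u v = (m + 2) + 1) (by omega)]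
          have h2 : ¬ (m + 3 = m + 1) := by omega
          simp [hc, h2]
    · -- j ≥ m + 4 : far
      rw [hcard_zero_far rfl (Or.inr (by omega))]
      have h1 : G.dist u v ≠ m + 3 := by omega
      have h2 : G.dist u v ≠ m + 1 := by omega
      simp [h1, h2]
  -- D 0 is the identity, D 1 is the adjacency matrix
  have hD0 : D 0 = 1 := by
    ext u v
    simp only [hD, Matrix.of_apply, Matrix.one_apply]
    by_cases huv : u = v
    · subst huv; simp [SimpleGraph.dist_self]
    · simp [huv, (hconn.dist_eq_zero_iff).ne.mpr huv]
  have hD1 : D 1 = G.adjMatrix ℝ := by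
    ext u v
    simp only [hD, Matrix.of_apply, SimpleGraph.adjMatrix_apply]
    by_cases hadj : G.Adj u v
    · simp [hadj, SimpleGraph.dist_eq_one_iff_adj.mpr hadj]
    · have : G.dist u v ≠ 1 := fun h => hadj (SimpleGraph.dist_eq_one_iff_adj.mp h)
      simp [hadj, this]
  -- main induction
  intro i
  induction i using Nat.strong_induction_on with
  | _ i ih =>
    intro hi
    match i with
    | 0 =>
      simp only [treeF, map_one]
      exact hD0.symm
    | 1 =>
      simp only [treeF, aeval_X]
      exact hD1.symm
    | 2 =>
      have h2 : 2 < d := hi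
      simp only [treeF, map_sub, map_pow, aeval_X, aeval_C]
      have hA2 : G.adjMatrix ℝ * G.adjMatrix ℝ = D 2 + (k : ℝ) • D 0 := by
        have h := hM1 h2
        rw [hD1] at h
        exact h
      rw [sq, hA2, hD0]
      rw [Algebra.algebraMap_eq_smul_one]
      abel
    | (n + 3) =>
      have h1 : n + 1 < d := by omega
      have h2 : n + 2 < d := by omega
      have e1 := ih (n + 1) (by omega) h1
      have e2 := ih (n + 2) (by omega) h2
      rw [show treeF (↑k) (n + 3)
            = X * treeF (↑k) (n + 2) - C ((k : ℝ) - 1) * treeF (↑k) (n + 1) from rfl,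
          map_sub, map_mul, map_mul, aeval_X, aeval_C, e1, e2]
      show G.adjMatrix ℝ * D (n + 2)
          - algebraMap ℝ (Matrix V V ℝ) ((k : ℝ) - 1) * D (n + 1) = D (n + 3)
      rw [Algebra.algebraMap_eq_smul_one, smul_mul_assoc, one_mul, hM2 n hi]
      abel
end

section
/- Hoffman polynomial identity: if G is a connected k-regular simple graph on v vertices with distinct eigenvalues τ_0=k, τ_1,…,τ_d, then (v/∏_{i=1}^d (k-τ_i))·∏_{i=1}^d (A - τ_i·I) = J, where J is the all-ones matrix. -/
open Polynomial Matrix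

section helpers

variable {n : Type} [Fintype n] [DecidableEq n]

/-- aeval commutes with conjugation by an invertible matrix. -/
lemma aeval_conj_helper (u w D : Matrix n n ℝ) (h1 : u * w = 1) (h2 : w * u = 1)
    (q : ℝ[X]) : Polynomial.aeval (u * D * w) q = u * Polynomial.aeval D q * w := by
  induction q using Polynomial.induction_on with
  | C a =>
      simp only [aeval_C, Algebra.algebraMap_eq_smul_one]
      rw [Matrix.mul_smul, mul_one, Matrix.smul_mul, h1]
  | add p q hp hq =>
      simp [map_add, hp, hq, Matrix.mul_add, Matrix.add_mul]
  | monomial m a ih =>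
      have hsplit : C a * X ^ (m + 1) = C a * X ^ m * X := by ring
      rw [hsplit, _root_.map_mul, aeval_X, ih]
      conv_rhs => rw [_root_.map_mul, aeval_X]
      rw [show u * Polynomial.aeval D (C a * X ^ m) * w * (u * D * w)
            = u * (Polynomial.aeval D (C a * X ^ m) * (w * u) * D) * w by
          noncomm_ring]
      rw [h2, mul_one]

lemma aeval_diagonal_helper (f : n → ℝ) (q : ℝ[X]) :
    Polynomial.aeval (Matrix.diagonal f) q
      = Matrix.diagonal (fun i => q.eval (f i)) := by
  have h1 : Matrix.diagonal f = Matrix.diagonalAlgHom (n := n) ℝ f := rfl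
  have h2 : (Polynomial.aeval f q : n → ℝ) = fun i => q.eval (f i) := by
    funext i
    have h3 := aeval_algHom_apply (Pi.evalAlgHom ℝ (fun _ => ℝ) i) f q
    simp only [Pi.evalAlgHom_apply] at h3
    rw [← h3, ← Polynomial.coe_aeval_eq_eval]
  rw [h1, aeval_algHom_apply, h2]
  rfl

/-- Polynomials of a matrix with constant row sums act on the all-one vector by evaluation. -/
lemma aeval_mulVec_one_helper (A : Matrix n n ℝ) (c : ℝ)
    (hA : A *ᵥ (fun _ => (1 : ℝ)) = fun _ => c) (q : ℝ[X]) :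
    (Polynomial.aeval A q) *ᵥ (fun _ => (1 : ℝ)) = fun _ => q.eval c := by
  induction q using Polynomial.induction_on with
  | C a =>
      simp only [aeval_C, eval_C, Algebra.algebraMap_eq_smul_one]
      rw [Matrix.smul_mulVec, Matrix.one_mulVec]
      funext i; simp
  | add p q hp hq =>
      simp only [map_add, eval_add, Matrix.add_mulVec, hp, hq]
      funext i; simp
  | monomial m a ih =>
      have hsplit : C a * X ^ (m + 1) = C a * X ^ m * X := by ring
      rw [hsplit, _root_.map_mul, aeval_X, ← Matrix.mulVec_mulVec, hA]
      have : (fun (_ : n) => c) = c • (fun (_ : n) => (1 : ℝ)) := by funext i; simp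
      rw [this, Matrix.mulVec_smul, ih]
      funext i; simp [eval_mul, pow_succ, eval_pow]
      ring

end helpers

/-- maximum principle: eigenvector of the adjacency matrix for eigenvalue k (the degree)
of a connected regular graph is constant. -/
lemma eigvec_const {V : Type} [Fintype V] [DecidableEq V]
    (G : SimpleGraph V) [DecidableRel G.Adj] (k : ℕ)
    (hreg : G.IsRegularOfDegree k) (hconn : G.Connected)
    (x : V → ℝ) (hx : G.adjMatrix ℝ *ᵥ x = (k : ℝ) • x) (u v : V) : x u = x v := by
  have hne : Nonempty V := hconn.nonempty
  obtain ⟨u0, -, hu0⟩ := Finset.exists_max_image Finset.univ x ⟨Classical.arbitrary V, Finset.mem_univ _⟩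
  set M := x u0 with hM
  have hu0' : ∀ w, x w ≤ M := fun w => hu0 w (Finset.mem_univ w)
  -- neighbors of a maximizer are maximizers
  have key : ∀ a b : V, G.Adj a b → x a = M → x b = M := by
    intro a b hab hxa
    have h1 : (G.adjMatrix ℝ *ᵥ x) a = (k : ℝ) * x a := by rw [hx]; simp
    rw [SimpleGraph.adjMatrix_mulVec_apply] at h1
    have hcard : (G.neighborFinset a).card = k := hreg a
    have h2 : ∑ w ∈ G.neighborFinset a, x w = ∑ w ∈ G.neighborFinset a, M := by
      rw [h1, hxa, Finset.sum_const, hcard, nsmul_eq_mul]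
    have h3 := (Finset.sum_eq_sum_iff_of_le (fun i _ => hu0' i)).mp h2
    exact h3 b (by rwa [SimpleGraph.mem_neighborFinset])
  have walkstep : ∀ (a b : V) (p : G.Walk a b), x a = M → x b = M := by
    intro a b p
    induction p with
    | nil => exact id
    | cons hadj _ ih => exact fun h => ih (key _ _ hadj h)
  have hall : ∀ w : V, x w = M := by
    intro w
    obtain ⟨p⟩ := hconn u0 w
    exact walkstep u0 w p rfl
  rw [hall u, hall v]

theorem hoffman_polynomial (V : Type) [Fintype V] [DecidableEq V]
    (G : SimpleGraph V) [DecidableRel G.Adj] (k : ℕ) (hk : 2 ≤ k)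
    (hreg : G.IsRegularOfDegree k) (hconn : G.Connected)
    (d : ℕ) (τ : Fin (d + 1) → ℝ) (hτ0 : τ 0 = k) (hτinj : Function.Injective τ)
    (hspec : spectrum ℝ (G.adjMatrix ℝ) = Set.range τ) :
    Polynomial.aeval (G.adjMatrix ℝ)
        (C ((Fintype.card V : ℝ) / ∏ i ∈ Finset.univ.erase 0, ((k : ℝ) - τ i)) *
          ∏ i ∈ Finset.univ.erase 0, (X - C (τ i))) =
      Matrix.of (fun _ _ => (1 : ℝ)) := by
  classical
  haveI : Nonempty V := hconn.nonempty
  set A : Matrix V V ℝ := G.adjMatrix ℝ with hAdef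
  have hH : A.IsHermitian := by
    show Aᴴ = A
    rw [Matrix.conjTranspose_eq_transpose_of_trivial]
    exact G.isSymm_adjMatrix
  set p : ℝ[X] := ∏ i ∈ Finset.univ.erase 0, (X - C (τ i)) with hpdef
  set m : ℝ[X] := ∏ i : Fin (d + 1), (X - C (τ i)) with hmdef
  have hm : m = (X - C (τ 0)) * p :=
    (Finset.mul_prod_erase Finset.univ _ (Finset.mem_univ 0)).symm
  set B : Matrix V V ℝ := Polynomial.aeval A p with hBdef
  -- the full product annihilates A
  have hmA : Polynomial.aeval A m = 0 := by
    have h1 : (hH.eigenvectorUnitary : Matrix V V ℝ) * star (hH.eigenvectorUnitary : Matrix V V ℝ) = 1 :=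
      Matrix.mem_unitaryGroup_iff.mp hH.eigenvectorUnitary.2
    have h2 : star (hH.eigenvectorUnitary : Matrix V V ℝ) * (hH.eigenvectorUnitary : Matrix V V ℝ) = 1 :=
      Matrix.mem_unitaryGroup_iff'.mp hH.eigenvectorUnitary.2
    have hz : ∀ i : V, m.eval ((RCLike.ofReal ∘ hH.eigenvalues) i) = 0 := by
      intro i
      have hmem : hH.eigenvalues i ∈ spectrum ℝ A := hH.eigenvalues_mem_spectrum_real i
      rw [hspec] at hmem
      obtain ⟨j, hj⟩ := hmem
      have : (RCLike.ofReal ∘ hH.eigenvalues) i = τ j := by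
        simp [Function.comp, ← hj]
      rw [this, hmdef, eval_prod]
      exact Finset.prod_eq_zero (Finset.mem_univ j) (by simp)
    conv_lhs => rw [hH.spectral_theorem, Unitary.conjStarAlgAut_apply]
    rw [aeval_conj_helper _ _ _ h1 h2, aeval_diagonal_helper]
    have : Matrix.diagonal (fun i => m.eval ((RCLike.ofReal ∘ hH.eigenvalues) i))
        = (0 : Matrix V V ℝ) := by
      rw [show (fun i => m.eval ((RCLike.ofReal ∘ hH.eigenvalues) i)) = fun _ => (0:ℝ) from
        funext hz]
      simp
    rw [this, mul_zero, zero_mul]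
  have hAB : A * B = (k : ℝ) • B := by
    have h := hmA
    rw [hm, _root_.map_mul, map_sub, aeval_X, aeval_C, Algebra.algebraMap_eq_smul_one,
      sub_mul, sub_eq_zero] at h
    rw [← hBdef] at h
    rw [h, smul_mul_assoc, one_mul, hτ0]
  have hBA : B * A = (k : ℝ) • B := by
    have h := hmA
    rw [hm, mul_comm (X - C (τ 0)) p, _root_.map_mul, map_sub, aeval_X, aeval_C,
      Algebra.algebraMap_eq_smul_one, mul_sub, sub_eq_zero] at h
    rw [← hBdef] at h
    rw [h, mul_smul_comm, mul_one, hτ0]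
  have hsym : ∀ a b : V, A a b = A b a := by
    intro a b
    simp [hAdef, SimpleGraph.adjMatrix_apply, G.adj_comm]
  -- columns of B are constant
  have hcol : ∀ (j i i' : V), B i j = B i' j := by
    intro j i i'
    refine eigvec_const G k hreg hconn (fun l => B l j) ?_ i i'
    funext l
    have h := congrFun (congrFun hAB l) j
    simp only [Matrix.mul_apply, Matrix.smul_apply, smul_eq_mul] at h
    simp only [Matrix.mulVec, dotProduct, Pi.smul_apply, smul_eq_mul]
    exact h
  -- rows of B are constant
  have hrow : ∀ (i j j' : V), B i j = B i j' := by
    intro i j j'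
    refine eigvec_const G k hreg hconn (fun l => B i l) ?_ j j'
    funext j0
    have h := congrFun (congrFun hBA i) j0
    simp only [Matrix.mul_apply, Matrix.smul_apply, smul_eq_mul] at h
    simp only [Matrix.mulVec, dotProduct, Pi.smul_apply, smul_eq_mul]
    rw [← h]
    refine Finset.sum_congr rfl fun l _ => ?_
    rw [mul_comm (B i l)]
    exact congrArg (fun t => t * B i l) (hsym j0 l)
  have hconst : ∀ (i j i' j' : V), B i j = B i' j' := fun i j i' j' =>
    (hcol j i i').trans (hrow i' j j')
  set a : V := Classical.arbitrary V with hadef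
  set c0 : ℝ := B a a with hc0def
  -- row sums of B
  have hA1 : A *ᵥ (fun _ => (1 : ℝ)) = fun _ => (k : ℝ) := by
    funext v
    rw [SimpleGraph.adjMatrix_mulVec_apply]
    simp [hreg v]
  have hone : B *ᵥ (fun _ => (1 : ℝ)) = fun _ => p.eval (k : ℝ) :=
    aeval_mulVec_one_helper A (k : ℝ) hA1 p
  have hc0 : (Fintype.card V : ℝ) * c0 = p.eval (k : ℝ) := by
    have h := congrFun hone a
    simp only [Matrix.mulVec, dotProduct, mul_one] at h
    rw [← h]
    rw [show (∑ x : V, B a x) = ∑ _x : V, c0 from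
      Finset.sum_congr rfl (fun x _ => hconst a x a a), Finset.sum_const,
      Finset.card_univ, nsmul_eq_mul]
  have hPeval : p.eval (k : ℝ) = ∏ i ∈ Finset.univ.erase 0, ((k : ℝ) - τ i) := by
    rw [hpdef, eval_prod]
    simp
  have hPne : (∏ i ∈ Finset.univ.erase 0, ((k : ℝ) - τ i)) ≠ 0 := by
    rw [Finset.prod_ne_zero_iff]
    intro i hi
    have hi0 : i ≠ 0 := Finset.ne_of_mem_erase hi
    have : τ i ≠ (k : ℝ) := by
      rw [← hτ0]
      exact fun h => hi0 (hτinj h)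
    exact sub_ne_zero.mpr (Ne.symm this)
  have hvne : (Fintype.card V : ℝ) ≠ 0 :=
    Nat.cast_ne_zero.mpr Fintype.card_ne_zero
  have hc0val : c0 = (∏ i ∈ Finset.univ.erase 0, ((k : ℝ) - τ i)) / (Fintype.card V : ℝ) := by
    rw [eq_div_iff hvne, mul_comm, ← hPeval, hc0]
  rw [_root_.map_mul, aeval_C, Algebra.algebraMap_eq_smul_one, smul_mul_assoc, one_mul,
    ← hBdef]
  ext i j
  simp only [Matrix.smul_apply, Matrix.of_apply, smul_eq_mul]
  rw [hconst i j a a, ← hc0def, hc0val]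
  field_simp
end
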